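/- arXiv:2302.00363 — 9 statements merged into one kernel-verified Lean document; each statement's English description precedes it below -/
import Mathlib

section
/- Let x* ∈ ℝⁿ be a local minimizer for problem (P). Then x* is AKKT-stationary for (P), i.e., there exist sequences xᵏ ∈ ℝⁿ and yᵏ, zᵏ ∈ ℝᵐ such that zᵏ → c(x*) with g(zᵏ) → g(c(x*)), ∇f(xᵏ) + Jc(xᵏ)ᵀ yᵏ → 0, yᵏ ∈ ∂g(zᵏ) for all k, and c(xᵏ) − zᵏ → 0. -/
open Filter Topology Bornology

noncomputable section

variable {H : Type*} [NormedAddCommGroup H] [InnerProductSpace ℝ H]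

/-- The regular (Fréchet) subdifferential of an extended-real-valued function `h` at `x`:
`v` belongs to it iff `h x` is finite and
`liminf_{w → x, w ≠ x} (h w − h x − ⟨v, w − x⟩)/‖w − x‖ ≥ 0`. -/
def regSubdiff (h : H → EReal) (x : H) : Set H :=
  {v | h x ≠ ⊤ ∧ h x ≠ ⊥ ∧ (0 : EReal) ≤
    Filter.liminf
      (fun w => (h w - h x - ((inner ℝ v (w - x) : ℝ) : EReal)) / ((‖w - x‖ : ℝ) : EReal))
      (𝓝[≠] x)}

/-- The limiting (Mordukhovich) subdifferential of `h` at `x`: limits of regular subgradients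
along `h`-attentively convergent sequences. -/
def limSubdiff (h : H → EReal) (x : H) : Set H :=
  {v | ∃ xs vs : ℕ → H,
      Tendsto xs atTop (𝓝 x) ∧ Tendsto (fun k => h (xs k)) atTop (𝓝 (h x)) ∧
      (∀ k, vs k ∈ regSubdiff h (xs k)) ∧ Tendsto vs atTop (𝓝 v)}

/-- The proximal mapping of `g` with parameter `γ` evaluated at `u`, as a set:
`argmin_z { g(z) + ‖z − u‖²/(2γ) }`. -/
def proxSet (g : H → EReal) (γ : ℝ) (u : H) : Set H :=
  {z | ∀ w, g z + ((‖z - u‖ ^ 2 / (2 * γ) : ℝ) : EReal) ≤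
        g w + ((‖w - u‖ ^ 2 / (2 * γ) : ℝ) : EReal)}

/-- `g + ‖·‖²/(2γ)` is bounded below on the whole space. -/
def ProxBoundedAt (g : H → EReal) (γ : ℝ) : Prop :=
  ∃ b : ℝ, ∀ z, (b : EReal) ≤ g z + ((‖z‖ ^ 2 / (2 * γ) : ℝ) : EReal)

/-- `g` is prox-bounded: `g + ‖·‖²/(2γ)` is bounded below for some `γ > 0`. -/
def ProxBounded (g : H → EReal) : Prop :=
  ∃ γ > (0 : ℝ), ProxBoundedAt g γ

/-- The limiting normal cone to `D` at `z`: limits of `λᵏ (vᵏ − wᵏ)` with `λᵏ ≥ 0`,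
`wᵏ` a Euclidean projection of `vᵏ` onto `D`, and `vᵏ → z`. -/
def limNormalCone {H' : Type*} [NormedAddCommGroup H'] [NormedSpace ℝ H']
    (D : Set H') (z : H') : Set H' :=
  {v | ∃ (vs ws : ℕ → H') (ls : ℕ → ℝ), (∀ k, 0 ≤ ls k) ∧
      (∀ k, ws k ∈ D ∧ ∀ u ∈ D, ‖ws k - vs k‖ ≤ ‖u - vs k‖) ∧
      Tendsto vs atTop (𝓝 z) ∧ Tendsto (fun k => ls k • (vs k - ws k)) atTop (𝓝 v)}


lemma exists_min_of_lsc {X : Type*} [TopologicalSpace X] [FirstCountableTopology X]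
    {s : Set X} (hs : IsCompact s) (hne : s.Nonempty) {f : X → EReal}
    (hf : LowerSemicontinuous f) : ∃ a ∈ s, ∀ b ∈ s, f a ≤ f b := by
  obtain ⟨u, -, hu, humem⟩ := exists_seq_tendsto_sInf (hne.image f) (OrderBot.bddBelow _)
  choose x hxs hxu using humem
  obtain ⟨a, has, φ, hφ, hxa⟩ := hs.tendsto_subseq hxs
  refine ⟨a, has, fun b hb => ?_⟩
  have h1 : f a ≤ sInf (f '' s) := by
    by_contra hlt
    push_neg at hlt
    obtain ⟨y, hy1, hy2⟩ := exists_between hlt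
    have hev0 := hf a y hy2
    have hev := hxa.eventually hev0
    have hmono : Tendsto (fun j => u (φ j)) atTop (𝓝 (sInf (f '' s))) :=
      hu.comp hφ.tendsto_atTop
    have hy : y ≤ sInf (f '' s) := by
      refine ge_of_tendsto hmono ?_
      filter_upwards [hev] with j hj
      rw [Function.comp_apply, hxu (φ j)] at hj
      exact hj.le
    exact absurd (hy.trans_lt hy1) (lt_irrefl _)
  exact h1.trans (sInf_le (Set.mem_image_of_mem f hb))


lemma prox_mem_regSubdiff {g : H → EReal} (hgbot : ∀ z, g z ≠ ⊥) {γ : ℝ} (hγ : 0 < γ)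
    (u z : H) (hz : g z ≠ ⊤)
    (hmin : ∀ w, g z + ((‖z - u‖^2/(2*γ) : ℝ) : EReal) ≤ g w + ((‖w - u‖^2/(2*γ) : ℝ) : EReal)) :
    γ⁻¹ • (u - z) ∈ regSubdiff g z := by
  refine ⟨hz, hgbot z, ?_⟩
  set v : H := γ⁻¹ • (u - z) with hv
  set a : ℝ := (g z).toReal with ha
  have hga : g z = (a : EReal) := (EReal.coe_toReal hz (hgbot z)).symm
  -- pointwise lower bound for the difference quotient
  have key : ∀ w : H, w ≠ z →
      ((-(‖w - z‖/(2*γ)) : ℝ) : EReal) ≤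
        (g w - g z - ((inner ℝ v (w - z) : ℝ) : EReal)) / ((‖w - z‖ : ℝ) : EReal) := by
    intro w hw
    have hwz : (0:ℝ) < ‖w - z‖ := by
      rw [norm_pos_iff]; exact sub_ne_zero_of_ne hw
    -- numerator lower bound
    have hlow : ((a + ‖z - u‖^2/(2*γ) - ‖w - u‖^2/(2*γ) : ℝ) : EReal) ≤ g w := by
      rcases eq_or_ne (g w) ⊤ with htop | hne
      · rw [htop]; exact le_top
      · have hgw : g w = ((g w).toReal : EReal) := (EReal.coe_toReal hne (hgbot w)).symm
        have := hmin w
        rw [hga, hgw, ← EReal.coe_add, ← EReal.coe_add, EReal.coe_le_coe_iff] at this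
        rw [hgw, EReal.coe_le_coe_iff]
        linarith
    have hid : a + ‖z - u‖^2/(2*γ) - ‖w - u‖^2/(2*γ) - a - (inner ℝ v (w - z) : ℝ)
        = -(‖w - z‖^2/(2*γ)) := by
      have hinner : (inner ℝ v (w - z) : ℝ) = γ⁻¹ * (inner ℝ (u - z) (w - z) : ℝ) :=
        real_inner_smul_left _ _ _
      have hexp : ‖w - u‖^2 = ‖w - z‖^2 + 2 * (inner ℝ (w - z) (z - u) : ℝ) + ‖z - u‖^2 := by
        rw [show w - u = (w - z) + (z - u) by abel, norm_add_sq_real]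
      have hswap : (inner ℝ (w - z) (z - u) : ℝ) = -(inner ℝ (u - z) (w - z) : ℝ) := by
        rw [real_inner_comm]
        rw [show z - u = -(u - z) by abel, inner_neg_left]
      rw [hinner, hexp, hswap]
      field_simp
      ring
    have hnum : ((-(‖w - z‖^2/(2*γ)) : ℝ) : EReal)
        ≤ g w - g z - ((inner ℝ v (w - z) : ℝ) : EReal) := by
      rw [hga]
      calc ((-(‖w - z‖^2/(2*γ)) : ℝ) : EReal)
          = ((a + ‖z - u‖^2/(2*γ) - ‖w - u‖^2/(2*γ) : ℝ) : EReal)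
              - (a : EReal) - ((inner ℝ v (w - z) : ℝ) : EReal) := by
            rw [← EReal.coe_sub, ← EReal.coe_sub, ← hid]
        _ ≤ g w - (a : EReal) - ((inner ℝ v (w - z) : ℝ) : EReal) :=
            EReal.sub_le_sub (EReal.sub_le_sub hlow le_rfl) le_rfl
    calc ((-(‖w - z‖/(2*γ)) : ℝ) : EReal)
        = ((-(‖w - z‖^2/(2*γ)) : ℝ) : EReal) / ((‖w - z‖ : ℝ) : EReal) := by
          rw [← EReal.coe_div]
          congr 1
          field_simp
      _ ≤ _ := EReal.div_le_div_right_of_nonneg (by exact_mod_cast hwz.le) hnum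
  -- conclude liminf ≥ 0
  set L := liminf
      (fun w => (g w - g z - ((inner ℝ v (w - z) : ℝ) : EReal)) / ((‖w - z‖ : ℝ) : EReal))
      (𝓝[≠] z) with hL
  have hε : ∀ ε : ℝ, 0 < ε → ((-ε : ℝ) : EReal) ≤ L := by
    intro ε hε
    apply le_liminf_of_le (by isBoundedDefault)
    have hball : ∀ᶠ w in 𝓝[≠] z, ‖w - z‖ < 2*γ*ε ∧ w ≠ z := by
      apply Filter.Eventually.and
      · apply eventually_nhdsWithin_of_eventually_nhds
        have : ContinuousAt (fun w => ‖w - z‖) z := by fun_prop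
        have h0 : (fun w => ‖w - z‖) z < 2*γ*ε := by simp; positivity
        exact this.eventually_lt continuousAt_const h0
      · exact eventually_mem_nhdsWithin
    filter_upwards [hball] with w ⟨hw1, hw2⟩
    refine le_trans ?_ (key w hw2)
    rw [EReal.coe_le_coe_iff]
    have : ‖w - z‖/(2*γ) ≤ ε := by
      rw [div_le_iff₀ (by positivity)]
      linarith
    linarith
  by_contra hneg
  push_neg at hneg
  obtain ⟨y, hy1, hy2⟩ := EReal.exists_between_coe_real hneg
  have hy0 : y < 0 := by exact_mod_cast hy2
  have := hε (-y) (neg_pos.mpr hy0)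
  rw [neg_neg] at this
  exact absurd (this.trans_lt hy1) (lt_irrefl _)


lemma firstorder {E F : Type*} [NormedAddCommGroup E] [InnerProductSpace ℝ E] [CompleteSpace E]
    [NormedAddCommGroup F] [InnerProductSpace ℝ F] [CompleteSpace F]
    {f : E → ℝ} {c : E → F} (hf : ContDiff ℝ 1 f) (hc : ContDiff ℝ 1 c)
    {γ : ℝ} (hγ : 0 < γ) (z : F) (xstar x₀ : E)
    (hmin : IsLocalMin (fun x => f x + ‖c x - z‖^2/(2*γ) + ‖x - xstar‖^2) x₀) :
    gradient f x₀ + ContinuousLinearMap.adjoint (fderiv ℝ c x₀) (γ⁻¹ • (c x₀ - z))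
      = -((2:ℝ) • (x₀ - xstar)) := by
  have hdf : HasFDerivAt f (fderiv ℝ f x₀) x₀ :=
    ((hf.differentiable one_ne_zero) x₀).hasFDerivAt
  set J := fderiv ℝ c x₀ with hJdef
  have hJ : HasFDerivAt c J x₀ := ((hc.differentiable one_ne_zero) x₀).hasFDerivAt
  have h2 : HasFDerivAt (fun x => ‖c x - z‖^2) (2 • (innerSL ℝ (c x₀ - z)).comp J) x₀ :=
    (hJ.sub_const z).norm_sq
  have hq : HasFDerivAt (fun x => ‖c x - z‖^2/(2*γ))
      ((2*γ)⁻¹ • (2 • (innerSL ℝ (c x₀ - z)).comp J)) x₀ := by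
    have := h2.const_smul ((2*γ)⁻¹)
    exact this.congr_of_eventuallyEq
      (Filter.Eventually.of_forall fun x => by simp only [Pi.smul_apply, smul_eq_mul, div_eq_inv_mul])
  have h3 : HasFDerivAt (fun x => ‖x - xstar‖^2)
      (2 • (innerSL ℝ (x₀ - xstar)).comp (ContinuousLinearMap.id ℝ E)) x₀ :=
    ((hasFDerivAt_id x₀).sub_const xstar).norm_sq
  have hψ := (hdf.add hq).add h3
  have hD0 := hmin.hasFDerivAt_eq_zero hψ
  have hgrad : fderiv ℝ f x₀ = InnerProductSpace.toDual ℝ E (gradient f x₀) := by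
    have h1 : HasFDerivAt f (InnerProductSpace.toDual ℝ E (gradient f x₀)) x₀ :=
      ((hf.differentiable one_ne_zero) x₀).hasGradientAt.hasFDerivAt
    exact hdf.unique h1
  set G := gradient f x₀ + ContinuousLinearMap.adjoint J (γ⁻¹ • (c x₀ - z))
      + (2:ℝ) • (x₀ - xstar) with hG
  have hGzero : G = 0 := by
    have hinner : ∀ h : E, (inner ℝ G h : ℝ) = 0 := by
      intro h
      have happ := ContinuousLinearMap.ext_iff.mp hD0 h
      simp only [ContinuousLinearMap.add_apply, ContinuousLinearMap.smul_apply,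
        ContinuousLinearMap.comp_apply, innerSL_apply_apply, ContinuousLinearMap.coe_id', id_eq,
        ContinuousLinearMap.zero_apply, smul_eq_mul] at happ
      have e1 : (inner ℝ (gradient f x₀) h : ℝ) = fderiv ℝ f x₀ h := by
        rw [hgrad]; exact (InnerProductSpace.toDual_apply_apply).symm
      have e2 : (inner ℝ (ContinuousLinearMap.adjoint J (γ⁻¹ • (c x₀ - z))) h : ℝ)
          = γ⁻¹ * (inner ℝ (c x₀ - z) (J h) : ℝ) := by
        rw [ContinuousLinearMap.adjoint_inner_left, real_inner_smul_left]
      rw [hG, inner_add_left, inner_add_left, e1, e2, real_inner_smul_left]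
      simp only [nsmul_eq_mul, smul_eq_mul] at happ
      push_cast at happ
      have hγ' : γ ≠ 0 := ne_of_gt hγ
      field_simp at happ ⊢
      linarith
    have := hinner G
    rwa [inner_self_eq_zero] at this
  exact eq_neg_of_add_eq_zero_left hGzero

lemma regSubdiff_subset_limSubdiff (h : H → EReal) (x : H) :
    regSubdiff h x ⊆ limSubdiff h x := fun v hv =>
  ⟨fun _ => x, fun _ => v, tendsto_const_nhds, tendsto_const_nhds, fun _ => hv,
    tendsto_const_nhds⟩

lemma aux_cancel {x : EReal} {a u v P P' : ℝ}
    (h : (a : EReal) + (u : EReal) ≤ x + (v : EReal)) (hx : x ≠ ⊥)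
    (hup : u - v = P - P') : (a : EReal) + (P : EReal) ≤ x + (P' : EReal) := by
  rcases eq_or_ne x ⊤ with rfl | hxt
  · rw [EReal.top_add_coe]; exact le_top
  · lift x to ℝ using ⟨hxt, hx⟩
    rw [← EReal.coe_add, ← EReal.coe_add, EReal.coe_le_coe_iff] at h ⊢
    linarith


set_option maxHeartbeats 2000000 in
/-- Every local minimizer of (P): minimize f(x) + g(c(x)) is AKKT-stationary. -/
theorem local_minimizer_is_AKKT_stationary {n m : ℕ}
    (f : EuclideanSpace ℝ (Fin n) → ℝ)
    (c : EuclideanSpace ℝ (Fin n) → EuclideanSpace ℝ (Fin m))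
    (g : EuclideanSpace ℝ (Fin m) → EReal)
    (hf : ContDiff ℝ 1 f) (hc : ContDiff ℝ 1 c)
    (hgproper : ∃ z, g z ≠ ⊤) (hgbot : ∀ z, g z ≠ ⊥)
    (hglsc : LowerSemicontinuous g) (hgpb : ProxBounded g)
    (hbdd : ∃ b : ℝ, ∀ x, (b : EReal) ≤ (f x : EReal) + g (c x))
    (xstar : EuclideanSpace ℝ (Fin n))
    (hfeas : g (c xstar) ≠ ⊤)
    (hmin : ∃ δ > (0 : ℝ), ∀ x, g (c x) ≠ ⊤ → ‖x - xstar‖ ≤ δ →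
      (f xstar : EReal) + g (c xstar) ≤ (f x : EReal) + g (c x)) :
    ∃ (xs : ℕ → EuclideanSpace ℝ (Fin n)) (ys zs : ℕ → EuclideanSpace ℝ (Fin m)),
      Tendsto zs atTop (𝓝 (c xstar)) ∧
      Tendsto (fun k => g (zs k)) atTop (𝓝 (g (c xstar))) ∧
      Tendsto (fun k => gradient f (xs k) +
        ContinuousLinearMap.adjoint (fderiv ℝ c (xs k)) (ys k)) atTop (𝓝 0) ∧
      (∀ k, ys k ∈ limSubdiff g (zs k)) ∧
      Tendsto (fun k => c (xs k) - zs k) atTop (𝓝 0) := by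
  classical
  obtain ⟨δ, hδ, hloc⟩ := hmin
  obtain ⟨γ0, hγ0, b0, hb0⟩ := hgpb
  have hcf : Continuous f := hf.continuous
  have hcc : Continuous c := hc.continuous
  set K1 : Set (EuclideanSpace ℝ (Fin n)) := Metric.closedBall xstar δ with hK1def
  have hK1c : IsCompact K1 := isCompact_closedBall xstar δ
  have hxK1 : xstar ∈ K1 := Metric.mem_closedBall_self hδ.le
  obtain ⟨M, hM⟩ := hK1c.exists_bound_of_continuousOn hcc.continuousOn
  obtain ⟨Cf, hCf⟩ := hK1c.exists_bound_of_continuousOn hcf.continuousOn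
  have hM0 : 0 ≤ M := le_trans (norm_nonneg _) (hM xstar hxK1)
  set gR : ℝ := (g (c xstar)).toReal with hgRdef
  have hgcx : g (c xstar) = (gR : EReal) := (EReal.coe_toReal hfeas (hgbot _)).symm
  set Vr : ℝ := f xstar + gR with hVrdef
  set E0 : ℝ := -Cf + b0 - 2*M^2/γ0 with hE0def
  set R : ℝ := max M (Real.sqrt (2*γ0*(Vr - E0))) with hRdef
  clear_value gR Vr E0
  have hMR : M ≤ R := le_max_left _ _
  have hR0 : 0 ≤ R := hM0.trans hMR
  clear_value R
  have hR2 : ∀ w : EuclideanSpace ℝ (Fin m), R < ‖w‖ → Vr ≤ E0 + ‖w‖^2/(2*γ0) := by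
    intro w hw
    by_cases hVE : Vr - E0 ≤ 0
    · have : 0 ≤ ‖w‖^2/(2*γ0) := by positivity
      linarith
    · push_neg at hVE
      have h1 : Real.sqrt (2*γ0*(Vr - E0)) ≤ R := by rw [hRdef]; exact le_max_right _ _
      have h2 : Real.sqrt (2*γ0*(Vr - E0)) ^ 2 ≤ ‖w‖^2 :=
        pow_le_pow_left₀ (Real.sqrt_nonneg _) (h1.trans hw.le) 2
      rw [Real.sq_sqrt (by positivity)] at h2
      rw [← sub_le_iff_le_add']
      rw [le_div_iff₀ (by positivity)]
      linarith
  set γ : ℕ → ℝ := fun k => γ0 / (4*((k:ℝ)+1)) with hγdef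
  have hγpos : ∀ k, 0 < γ k := fun k => by
    rw [hγdef]; positivity
  have hγle : ∀ k, γ k ≤ γ0/4 := fun k => by
    rw [hγdef]
    rw [div_le_div_iff₀ (by positivity) (by norm_num)]
    have : (1:ℝ) ≤ (k:ℝ) + 1 := by linarith [Nat.cast_nonneg (α := ℝ) k]
    nlinarith
  have hγto : Tendsto γ atTop (𝓝 0) := by
    rw [hγdef]
    apply Tendsto.div_atTop tendsto_const_nhds
    apply Tendsto.const_mul_atTop (by norm_num : (0:ℝ) < 4)
    exact tendsto_atTop_add_const_right _ 1 tendsto_natCast_atTop_atTop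
  clear_value γ
  set Φ : ℕ → EuclideanSpace ℝ (Fin n) × EuclideanSpace ℝ (Fin m) → EReal :=
    fun k q => g q.2 + ((f q.1 + ‖q.2 - c q.1‖^2/(2*γ k) + ‖q.1 - xstar‖^2 : ℝ) : EReal)
    with hΦdef
  have hΦlsc : ∀ k, LowerSemicontinuous (Φ k) := by
    intro k
    rw [hΦdef]
    intro q
    apply LowerSemicontinuousAt.add'
    · exact (LowerSemicontinuous.comp hglsc continuous_snd) q
    · refine ((Continuous.lowerSemicontinuous ?_)) q
      apply continuous_coe_real_ereal.comp
      apply Continuous.add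
      apply Continuous.add
      · exact hcf.comp continuous_fst
      · exact ((continuous_snd.sub (hcc.comp continuous_fst)).norm.pow 2).div_const _
      · exact ((continuous_fst.sub continuous_const).norm.pow 2)
    · apply EReal.continuousAt_add
      · exact Or.inr (EReal.coe_ne_bot _)
      · exact Or.inr (EReal.coe_ne_top _)
  have hLB : ∀ k, ∀ x ∈ K1, ∀ z : EuclideanSpace ℝ (Fin m),
      ((E0 + ‖z‖^2/(2*γ0) : ℝ) : EReal) ≤ Φ k (x, z) := by
    intro k x hx z
    simp only [hΦdef]
    rcases eq_or_ne (g z) ⊤ with ht | hne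
    · simp only [ht, EReal.top_add_coe]; exact le_top
    · have hgz : g z = ((g z).toReal : EReal) := (EReal.coe_toReal hne (hgbot z)).symm
      rw [hgz, ← EReal.coe_add, EReal.coe_le_coe_iff]
      have hb0' : b0 ≤ (g z).toReal + ‖z‖^2/(2*γ0) := by
        have := hb0 z
        rw [hgz, ← EReal.coe_add, EReal.coe_le_coe_iff] at this
        exact this
      have hfx : -Cf ≤ f x := neg_le_of_abs_le (hCf x hx)
      have hcx : ‖c x‖ ≤ M := hM x hx
      have htri : ‖z‖ ≤ ‖z - c x‖ + ‖c x‖ := by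
        calc ‖z‖ = ‖(z - c x) + c x‖ := by rw [sub_add_cancel]
        _ ≤ _ := norm_add_le _ _
      have h1 : ‖z‖^2/2 - M^2 ≤ ‖z - c x‖^2 := by
        nlinarith [norm_nonneg (z - c x), norm_nonneg (c x), norm_nonneg z,
          sq_nonneg (‖z - c x‖ - ‖c x‖)]
      have hpen1 : ‖z - c x‖^2 * (2/γ0) ≤ ‖z - c x‖^2 / (2*γ k) := by
        rw [div_eq_mul_inv (‖z - c x‖^2)]
        apply mul_le_mul_of_nonneg_left _ (sq_nonneg _)
        have h4 : 4 * γ k ≤ γ0 := by linarith [hγle k]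
        rw [inv_eq_one_div, div_le_div_iff₀ (by positivity) (by linarith [hγpos k])]
        nlinarith [hγpos k]
      have hpen2 : (‖z‖^2/2 - M^2) * (2/γ0) ≤ ‖z - c x‖^2 * (2/γ0) :=
        mul_le_mul_of_nonneg_right h1 (by positivity)
      have hkey : (‖z‖^2/2 - M^2) * (2/γ0) = ‖z‖^2/(2*γ0) + ‖z‖^2/(2*γ0) - 2*M^2/γ0 := by
        field_simp
        ring
      have hr : 0 ≤ ‖x - xstar‖^2 := sq_nonneg _
      rw [hE0def]
      linarith
  set K : Set (EuclideanSpace ℝ (Fin n) × EuclideanSpace ℝ (Fin m)) :=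
    K1 ×ˢ Metric.closedBall 0 R with hKdef
  have hKc : IsCompact K := hK1c.prod (isCompact_closedBall _ _)
  have hKne : (xstar, c xstar) ∈ K := by
    refine ⟨hxK1, ?_⟩
    simp only [Metric.mem_closedBall, dist_zero_right]
    exact (hM xstar hxK1).trans hMR
  have hmins : ∀ k, ∃ p ∈ K, ∀ q ∈ K, Φ k p ≤ Φ k q := fun k =>
    exists_min_of_lsc hKc ⟨_, hKne⟩ (hΦlsc k)
  choose p hpK hpmin using hmins
  have hxsK1 : ∀ k, (p k).1 ∈ K1 := fun k => (hpK k).1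
  have hzsR : ∀ k, ‖(p k).2‖ ≤ R := fun k => by
    have := (hpK k).2
    simpa [Metric.mem_closedBall, dist_zero_right] using this
  have hΦstar : ∀ k, Φ k (xstar, c xstar) = (Vr : EReal) := by
    intro k
    simp only [hΦdef, sub_self, norm_zero]
    rw [hgcx, ← EReal.coe_add, EReal.coe_eq_coe_iff, hVrdef]
    norm_num
    ring
  have hVle : ∀ k, Φ k (p k) ≤ (Vr : EReal) := fun k =>
    (hpmin k (xstar, c xstar) hKne).trans_eq (hΦstar k)
  have hgzs : ∀ k, g (p k).2 ≠ ⊤ := by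
    intro k htop
    have := hVle k
    simp only [hΦdef, htop, EReal.top_add_coe, top_le_iff] at this
    exact EReal.coe_ne_top _ this
  have hga : ∀ k, g (p k).2 = (((g (p k).2).toReal : ℝ) : EReal) := fun k =>
    (EReal.coe_toReal (hgzs k) (hgbot _)).symm
  set a : ℕ → ℝ := fun k => (g (p k).2).toReal with hadef
  have hreal : ∀ k, a k + (f (p k).1 + ‖(p k).2 - c (p k).1‖^2/(2*γ k)
      + ‖(p k).1 - xstar‖^2) ≤ Vr := by
    intro k
    have := hVle k
    simp only [hΦdef] at this
    rw [hga k, ← EReal.coe_add, EReal.coe_le_coe_iff] at this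
    exact this
  have halb : ∀ k, b0 - R^2/(2*γ0) ≤ a k := by
    intro k
    have h1 := hb0 (p k).2
    rw [hga k, ← EReal.coe_add, EReal.coe_le_coe_iff] at h1
    have h2 : ‖(p k).2‖^2 ≤ R^2 := pow_le_pow_left₀ (norm_nonneg _) (hzsR k) 2
    have h3 : ‖(p k).2‖^2/(2*γ0) ≤ R^2/(2*γ0) :=
      (div_le_div_iff_of_pos_right (by positivity)).mpr h2
    linarith
  obtain ⟨C1, hC1def⟩ : ∃ C1 : ℝ, C1 = Vr + Cf - b0 + R^2/(2*γ0) := ⟨_, rfl⟩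
  have hpen : ∀ k, ‖(p k).2 - c (p k).1‖^2 ≤ 2 * γ k * C1 := by
    intro k
    have h1 := hreal k
    have h2 := halb k
    have h3 : -Cf ≤ f (p k).1 := neg_le_of_abs_le (hCf _ (hxsK1 k))
    have h4 : 0 ≤ ‖(p k).1 - xstar‖^2 := sq_nonneg _
    have h5 : ‖(p k).2 - c (p k).1‖^2/(2*γ k) ≤ C1 := by rw [hC1def]; linarith
    rw [div_le_iff₀ (by linarith [hγpos k])] at h5
    linarith
  have hdto : Tendsto (fun k => (p k).2 - c (p k).1) atTop (𝓝 0) := by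
    have h0 : Tendsto (fun k => 2 * γ k * C1) atTop (𝓝 0) := by
      have := (hγto.const_mul 2).mul_const C1
      simpa using this
    have hsq : Tendsto (fun k => ‖(p k).2 - c (p k).1‖^2) atTop (𝓝 0) :=
      squeeze_zero (fun k => sq_nonneg _) hpen h0
    have hn : Tendsto (fun k => ‖(p k).2 - c (p k).1‖) atTop (𝓝 0) := by
      have h2 := (Real.continuous_sqrt.tendsto 0).comp hsq
      rw [Real.sqrt_zero] at h2
      exact Tendsto.congr (fun k => Real.sqrt_sq (norm_nonneg _)) h2
    exact tendsto_zero_iff_norm_tendsto_zero.mpr hn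
  have hProxΦ : ∀ k, ∀ w : EuclideanSpace ℝ (Fin m),
      Φ k (p k) ≤ Φ k ((p k).1, w) := by
    intro k w
    by_cases hwR : ‖w‖ ≤ R
    · refine hpmin k ((p k).1, w) ⟨hxsK1 k, ?_⟩
      simpa [Metric.mem_closedBall, dist_zero_right] using hwR
    · push_neg at hwR
      calc Φ k (p k) ≤ (Vr : EReal) := hVle k
      _ ≤ ((E0 + ‖w‖^2/(2*γ0) : ℝ) : EReal) := by
          rw [EReal.coe_le_coe_iff]; exact hR2 w hwR
      _ ≤ _ := hLB k _ (hxsK1 k) w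
  have hprox : ∀ k, ∀ w : EuclideanSpace ℝ (Fin m),
      g (p k).2 + ((‖(p k).2 - c (p k).1‖^2/(2*γ k) : ℝ) : EReal) ≤
        g w + ((‖w - c (p k).1‖^2/(2*γ k) : ℝ) : EReal) := by
    intro k w
    have h1 := hProxΦ k w
    simp only [hΦdef] at h1
    rw [hga k] at h1 ⊢
    exact aux_cancel h1 (hgbot w) (by ring)
  set ys : ℕ → EuclideanSpace ℝ (Fin m) := fun k => (γ k)⁻¹ • (c (p k).1 - (p k).2)
    with hysdef
  have hys : ∀ k, ys k ∈ regSubdiff g ((p k).2) := fun k =>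
    prox_mem_regSubdiff hgbot (hγpos k) (c (p k).1) ((p k).2) (hgzs k) (hprox k)
  have hcont2 : Continuous (fun x => Vr - f x - ‖x - xstar‖^2) := by
    apply Continuous.sub
    · exact continuous_const.sub hcf
    · exact (continuous_id.sub continuous_const).norm.pow 2
  have hub : ∀ k, a k ≤ Vr - f (p k).1 - ‖(p k).1 - xstar‖^2 := by
    intro k
    have h1 := hreal k
    have h2 : 0 ≤ ‖(p k).2 - c (p k).1‖^2/(2*γ k) :=
      div_nonneg (sq_nonneg _) (by linarith [hγpos k])
    linarith
  have hxs : Tendsto (fun k => (p k).1) atTop (𝓝 xstar) := by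
    apply tendsto_of_subseq_tendsto
    intro ns hns
    obtain ⟨xbar, hxbarK, φ, hφ, hconv⟩ := hK1c.tendsto_subseq (fun j => hxsK1 (ns j))
    refine ⟨φ, ?_⟩
    suffices hbar : xbar = xstar by
      rw [← hbar]; exact hconv
    have hσ : Tendsto (fun j => ns (φ j)) atTop atTop := hns.comp hφ.tendsto_atTop
    have hxσ : Tendsto (fun j => (p (ns (φ j))).1) atTop (𝓝 xbar) := hconv
    have hcxσ : Tendsto (fun j => c ((p (ns (φ j))).1)) atTop (𝓝 (c xbar)) :=
      (hcc.tendsto xbar).comp hxσ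
    have hzσ : Tendsto (fun j => (p (ns (φ j))).2) atTop (𝓝 (c xbar)) := by
      have hd : Tendsto (fun j => (p (ns (φ j))).2 - c ((p (ns (φ j))).1)) atTop (𝓝 0) :=
        hdto.comp hσ
      have := hd.add hcxσ
      simpa using this
    obtain ⟨B, hBdef⟩ : ∃ B : ℝ, B = Vr - f xbar - ‖xbar - xstar‖^2 := ⟨_, rfl⟩
    have hBt : Tendsto (fun j => Vr - f ((p (ns (φ j))).1) - ‖(p (ns (φ j))).1 - xstar‖^2)
        atTop (𝓝 B) := by
      rw [hBdef]
      exact (hcont2.tendsto xbar).comp hxσ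
    have hgbar : g (c xbar) ≤ (B : EReal) := by
      by_contra hlt
      push_neg at hlt
      obtain ⟨y, hy1, hy2⟩ := EReal.exists_between_coe_real hlt
      have hev := hzσ.eventually (hglsc (c xbar) y hy2)
      have hyB : y ≤ B := by
        refine ge_of_tendsto hBt ?_
        filter_upwards [hev] with j hj
        have hja : (y : EReal) < ((a (ns (φ j)) : ℝ) : EReal) := by
          rw [← hga] ; exact hj
        rw [EReal.coe_lt_coe_iff] at hja
        exact (le_of_lt hja).trans (hub (ns (φ j)))
      exact absurd (hyB.trans_lt (EReal.coe_lt_coe_iff.mp hy1)) (lt_irrefl _)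
    have hfeas2 : g (c xbar) ≠ ⊤ := by
      intro ht
      rw [ht] at hgbar
      exact (EReal.coe_ne_top B) (top_le_iff.mp hgbar)
    have hdist : ‖xbar - xstar‖ ≤ δ := by
      have := hxbarK
      rw [hK1def, Metric.mem_closedBall, dist_eq_norm] at this
      exact this
    have hminx := hloc xbar hfeas2 hdist
    have hchain : (Vr : EReal) ≤ ((f xbar + B : ℝ) : EReal) := by
      calc (Vr : EReal) = (f xstar : EReal) + g (c xstar) := by
            rw [hgcx, ← EReal.coe_add, hVrdef]
        _ ≤ (f xbar : EReal) + g (c xbar) := hminx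
        _ ≤ (f xbar : EReal) + (B : EReal) := add_le_add le_rfl hgbar
        _ = ((f xbar + B : ℝ) : EReal) := (EReal.coe_add _ _).symm
    rw [EReal.coe_le_coe_iff, hBdef] at hchain
    have hsq : ‖xbar - xstar‖^2 ≤ 0 := by linarith
    have : ‖xbar - xstar‖ = 0 := by nlinarith [norm_nonneg (xbar - xstar)]
    rw [norm_eq_zero, sub_eq_zero] at this
    exact this
  have hcxs : Tendsto (fun k => c ((p k).1)) atTop (𝓝 (c xstar)) :=
    (hcc.tendsto xstar).comp hxs
  have hzst : Tendsto (fun k => (p k).2) atTop (𝓝 (c xstar)) := by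
    have := hdto.add hcxs
    simpa using this
  have hat : Tendsto a atTop (𝓝 gR) := by
    rw [tendsto_order]
    constructor
    · intro y hy
      have hycoe : (y : EReal) < g (c xstar) := by
        rw [hgcx]; exact_mod_cast hy
      have hev := hzst.eventually (hglsc (c xstar) y hycoe)
      filter_upwards [hev] with k hk
      have : (y : EReal) < ((a k : ℝ) : EReal) := by rw [← hga]; exact hk
      exact EReal.coe_lt_coe_iff.mp this
    · intro y hy
      have hBt2 : Tendsto (fun k => Vr - f ((p k).1) - ‖(p k).1 - xstar‖^2) atTop (𝓝 gR) := by
        have h1 := (hcont2.tendsto xstar).comp hxs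
        have h2 : Vr - f xstar - ‖xstar - xstar‖^2 = gR := by
          rw [hVrdef]; simp
        rwa [h2] at h1
      have hev := hBt2.eventually_lt_const hy
      filter_upwards [hev] with k hk
      exact lt_of_le_of_lt (hub k) hk
  have hgt : Tendsto (fun k => g ((p k).2)) atTop (𝓝 (g (c xstar))) := by
    rw [hgcx]
    have := (continuous_coe_real_ereal.tendsto gR).comp hat
    exact Tendsto.congr (fun k => (hga k).symm) this
  have hball : ∀ᶠ k in atTop, (p k).1 ∈ Metric.ball xstar δ :=
    hxs (Metric.ball_mem_nhds xstar hδ)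
  have hfo : ∀ᶠ k in atTop,
      gradient f ((p k).1) + ContinuousLinearMap.adjoint (fderiv ℝ c ((p k).1)) (ys k)
        = -((2:ℝ) • ((p k).1 - xstar)) := by
    filter_upwards [hball] with k hk
    have hK1n : K1 ∈ 𝓝 ((p k).1) := by
      rw [hK1def]; exact Metric.closedBall_mem_nhds_of_mem hk
    have hlm : IsLocalMin (fun x => f x + ‖c x - (p k).2‖^2/(2*γ k) + ‖x - xstar‖^2)
        ((p k).1) := by
      have hev : ∀ᶠ x in 𝓝 ((p k).1),
          (fun x => f x + ‖c x - (p k).2‖^2/(2*γ k) + ‖x - xstar‖^2) ((p k).1) ≤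
          (fun x => f x + ‖c x - (p k).2‖^2/(2*γ k) + ‖x - xstar‖^2) x := by
        filter_upwards [hK1n] with x hx
        have h1 := hpmin k (x, (p k).2) ⟨hx, (hpK k).2⟩
        simp only [hΦdef] at h1
        rw [hga k, ← EReal.coe_add, ← EReal.coe_add, EReal.coe_le_coe_iff] at h1
        have e1 : ‖c ((p k).1) - (p k).2‖ = ‖(p k).2 - c ((p k).1)‖ := norm_sub_rev _ _
        have e2 : ‖c x - (p k).2‖ = ‖(p k).2 - c x‖ := norm_sub_rev _ _
        rw [e1, e2]
        linarith
      exact hev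
    exact firstorder hf hc (hγpos k) ((p k).2) xstar ((p k).1) hlm
  have hgradto : Tendsto (fun k => gradient f ((p k).1)
      + ContinuousLinearMap.adjoint (fderiv ℝ c ((p k).1)) (ys k)) atTop (𝓝 0) := by
    have h1 : Tendsto (fun k => (p k).1 - xstar) atTop (𝓝 0) := by
      have := hxs.sub (tendsto_const_nhds (x := xstar))
      simpa using this
    have h2 : Tendsto (fun k => -((2:ℝ) • ((p k).1 - xstar))) atTop (𝓝 0) := by
      have := (h1.const_smul (2:ℝ)).neg
      simpa using this
    exact Tendsto.congr' (hfo.mono fun k hk => hk.symm) h2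
  have hcz : Tendsto (fun k => c ((p k).1) - (p k).2) atTop (𝓝 0) := by
    have := hdto.neg
    simpa using this
  exact ⟨fun k => (p k).1, ys, fun k => (p k).2, hzst, hgt, hgradto,
    fun k => regSubdiff_subset_limSubdiff g _ (hys k), hcz⟩


end
end

section
/- Consider sequences generated by the safeguarded implicit AL method for problem (P). If there exists B ∈ ℝ such that L_{μ_k}(xᵏ, ŷᵏ) = f(xᵏ) + g(zᵏ) + ‖c(xᵏ) + μ_k ŷᵏ − zᵏ‖²/(2μ_k) − (μ_k/2)‖ŷᵏ‖² ≤ B for all k ∈ ℕ, then every accumulation point x* of {xᵏ} is feasible for (P), i.e., c(x*) ∈ dom g. -/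
open Filter Topology Bornology

noncomputable section

variable {H : Type*} [NormedAddCommGroup H] [InnerProductSpace ℝ H]

set_option maxHeartbeats 2000000 in
/-- If the AL values are bounded above along the iterates of the
safeguarded implicit AL method, then every accumulation point is feasible. -/
theorem AL_bounded_implies_feasible {n m : ℕ}
    (f : EuclideanSpace ℝ (Fin n) → ℝ)
    (c : EuclideanSpace ℝ (Fin n) → EuclideanSpace ℝ (Fin m))
    (g : EuclideanSpace ℝ (Fin m) → EReal)
    (hf : ContDiff ℝ 1 f) (hc : ContDiff ℝ 1 c)
    (hgproper : ∃ z, g z ≠ ⊤) (hgbot : ∀ z, g z ≠ ⊥)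
    (hglsc : LowerSemicontinuous g) (hgpb : ProxBounded g)
    (hbdd : ∃ b : ℝ, ∀ x, (b : EReal) ≤ (f x : EReal) + g (c x))
    -- parameters of the safeguarded implicit AL method
    (θ κ : ℝ) (hθ : θ ∈ Set.Ioo (0 : ℝ) 1) (hκ : κ ∈ Set.Ioo (0 : ℝ) 1)
    (Y : Set (EuclideanSpace ℝ (Fin m))) (hYne : Y.Nonempty) (hYbdd : IsBounded Y)
    -- iterates of the method
    (x : ℕ → EuclideanSpace ℝ (Fin n))
    (z yh y : ℕ → EuclideanSpace ℝ (Fin m))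
    (μ etol : ℕ → ℝ)
    (hμ0 : 0 < μ 0)
    (hyh : ∀ k, yh k ∈ Y)
    (hetol : ∀ k, 0 ≤ etol k)
    (hz : ∀ k, z k ∈ proxSet g (μ k) (c (x k) + μ k • yh k))
    (hy : ∀ k, y k = yh k + (μ k)⁻¹ • (c (x k) - z k))
    (hdual : ∀ k, ‖gradient f (x k) +
        ContinuousLinearMap.adjoint (fderiv ℝ c (x k)) (y k)‖ ≤ etol k)
    (hμ1 : μ 1 = μ 0)
    (hμupd : ∀ k, 1 ≤ k →
      μ (k + 1) =
        if ‖c (x k) - z k‖ ≤ θ * ‖c (x (k - 1)) - z (k - 1)‖ then μ k else κ * μ k)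
    -- upper bound on the augmented Lagrangian values
    (hB : ∃ B : ℝ, ∀ k,
      ((f (x k) + ‖c (x k) + μ k • yh k - z k‖ ^ 2 / (2 * μ k)
          - μ k / 2 * ‖yh k‖ ^ 2 : ℝ) : EReal) + g (z k) ≤ (B : EReal))
    (xstar : EuclideanSpace ℝ (Fin n))
    (hacc : ∃ φ : ℕ → ℕ, StrictMono φ ∧ Tendsto (fun k => x (φ k)) atTop (𝓝 xstar)) :
    g (c xstar) ≠ ⊤ := by
  intro htop
  obtain ⟨φ, hφm, hφt⟩ := hacc
  obtain ⟨B, hB⟩ := hB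
  obtain ⟨M, hM⟩ := isBounded_iff_forall_norm_le.mp hYbdd
  have hM0 : 0 ≤ M := (norm_nonneg _).trans (hM _ hYne.choose_spec)
  obtain ⟨zh, hzh⟩ := hgproper
  obtain ⟨γ, hγ, b0, hb0⟩ := hgpb
  -- positivity and monotonicity of μ
  have hμpos : ∀ k, 0 < μ k := by
    intro k
    induction k using Nat.strong_induction_on with
    | _ k ih =>
      match k with
      | 0 => exact hμ0
      | 1 => rw [hμ1]; exact hμ0
      | (j+2) =>
        rw [hμupd (j+1) (by omega)]
        split
        · exact ih (j+1) (by omega)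
        · exact mul_pos hκ.1 (ih (j+1) (by omega))
  have hμa : Antitone μ := by
    apply antitone_nat_of_succ_le
    intro k
    match k with
    | 0 => rw [hμ1]
    | (j+1) =>
      rw [hμupd (j+1) (by omega)]
      split
      · exact le_rfl
      · nlinarith [hμpos (j+1), hκ.1, hκ.2]
  -- g (z k) is finite
  have hgzt : ∀ k, g (z k) ≠ ⊤ := by
    intro k he
    have h := hB k
    rw [he, EReal.add_top_of_ne_bot (EReal.coe_ne_bot _)] at h
    exact absurd h (not_le.mpr (EReal.coe_lt_top B))
  have hgz : ∀ k, g (z k) = (((g (z k)).toReal : ℝ) : EReal) :=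
    fun k => (EReal.coe_toReal (hgzt k) (hgbot _)).symm
  set gz : ℕ → ℝ := fun k => (g (z k)).toReal with hgzdef
  have hzh' : g zh = (((g zh).toReal : ℝ) : EReal) :=
    (EReal.coe_toReal hzh (hgbot _)).symm
  set gzh : ℝ := (g zh).toReal with hgzhdef
  -- real form of the AL bound
  have hBr : ∀ k, f (x k) + ‖c (x k) + μ k • yh k - z k‖ ^ 2 / (2 * μ k)
      - μ k / 2 * ‖yh k‖ ^ 2 + gz k ≤ B := by
    intro k
    have h := hB k
    rw [hgz k, ← EReal.coe_add, EReal.coe_le_coe_iff] at h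
    exact h
  -- real form of the prox inequality at zh
  have hproxr : ∀ k, gz k + ‖z k - (c (x k) + μ k • yh k)‖ ^ 2 / (2 * μ k)
      ≤ gzh + ‖zh - (c (x k) + μ k • yh k)‖ ^ 2 / (2 * μ k) := by
    intro k
    have h := hz k zh
    rw [hgz k, hzh', ← EReal.coe_add, ← EReal.coe_add, EReal.coe_le_coe_iff] at h
    exact h
  -- real form of prox-boundedness at z k
  have hpbr : ∀ k, b0 ≤ gz k + ‖z k‖ ^ 2 / (2 * γ) := by
    intro k
    have h := hb0 (z k)
    rw [hgz k, ← EReal.coe_add, EReal.coe_le_coe_iff] at h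
    exact h
  -- convergence of f along the subsequence
  have hft : Tendsto (fun k => f (x (φ k))) atTop (𝓝 (f xstar)) :=
    (hf.continuous.tendsto xstar).comp hφt
  have hev3 : ∀ᶠ k in atTop, f xstar - 1 ≤ f (x (φ k)) := by
    filter_upwards [hft.eventually (eventually_gt_nhds
      (show f xstar - 1 < f xstar by linarith))] with k hk
    exact hk.le
  -- uniform eventual upper bound on gz along the subsequence
  set C : ℝ := B - f xstar + 1 + μ 0 / 2 * M ^ 2 with hCdef
  have hub : ∀ᶠ k in atTop, gz (φ k) ≤ C := by
    filter_upwards [hev3] with k hk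
    have h1 := hBr (φ k)
    have h2 : 0 ≤ ‖c (x (φ k)) + μ (φ k) • yh (φ k) - z (φ k)‖ ^ 2 / (2 * μ (φ k)) :=
      div_nonneg (sq_nonneg _) (by linarith [hμpos (φ k)])
    have h3 : ‖yh (φ k)‖ ≤ M := hM _ (hyh (φ k))
    have h4 : μ (φ k) ≤ μ 0 := hμa (Nat.zero_le _)
    have hy2 : ‖yh (φ k)‖ ^ 2 ≤ M ^ 2 := by
      nlinarith [norm_nonneg (yh (φ k))]
    have h5 : μ (φ k) / 2 * ‖yh (φ k)‖ ^ 2 ≤ μ 0 / 2 * M ^ 2 := by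
      nlinarith [mul_nonneg (sub_nonneg.mpr h4) (sq_nonneg M),
        mul_nonneg (hμpos (φ k)).le (sub_nonneg.mpr hy2)]
    simp only [hCdef]
    linarith
  -- the subsequence z ∘ φ converges to c xstar
  have hcx : Tendsto (fun k => c (x (φ k))) atTop (𝓝 (c xstar)) :=
    (hc.continuous.tendsto xstar).comp hφt
  have htendz : Tendsto (fun k => z (φ k)) atTop (𝓝 (c xstar)) := by
    by_cases hconst : ∃ K, ∀ k, K ≤ k → μ (k + 1) = μ k
    · -- μ eventually constant ⇒ V k → 0
      obtain ⟨K, hK⟩ := hconst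
      have hVstep : ∀ k, K + 1 ≤ k →
          ‖c (x k) - z k‖ ≤ θ * ‖c (x (k - 1)) - z (k - 1)‖ := by
        intro k hk
        have h2 := hμupd k (by omega)
        by_contra hcon
        rw [if_neg hcon] at h2
        have h3 := hK k (by omega)
        have h4 := hμpos k
        nlinarith [hκ.2]
      have hVgeo : ∀ j, ‖c (x (K + 1 + j)) - z (K + 1 + j)‖
          ≤ θ ^ j * ‖c (x (K + 1)) - z (K + 1)‖ := by
        intro j
        induction j with
        | zero => simp
        | succ j ih =>
          have hs := hVstep (K + 1 + (j + 1)) (by omega)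
          have he : K + 1 + (j + 1) - 1 = K + 1 + j := by omega
          rw [he] at hs
          calc ‖c (x (K + 1 + (j + 1))) - z (K + 1 + (j + 1))‖
              ≤ θ * ‖c (x (K + 1 + j)) - z (K + 1 + j)‖ := hs
            _ ≤ θ * (θ ^ j * ‖c (x (K + 1)) - z (K + 1)‖) :=
                mul_le_mul_of_nonneg_left ih hθ.1.le
            _ = θ ^ (j + 1) * ‖c (x (K + 1)) - z (K + 1)‖ := by ring
      have hVt : Tendsto (fun k => ‖c (x k) - z k‖) atTop (𝓝 0) := by
        rw [← tendsto_add_atTop_iff_nat (K + 1)]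
        have hgeo : Tendsto (fun j => θ ^ j * ‖c (x (K + 1)) - z (K + 1)‖) atTop (𝓝 0) := by
          simpa using (tendsto_pow_atTop_nhds_zero_of_lt_one hθ.1.le hθ.2).mul_const
            (‖c (x (K + 1)) - z (K + 1)‖)
        exact squeeze_zero (fun j => norm_nonneg _)
          (fun j => by have h := hVgeo j; rwa [Nat.add_comm (K + 1) j] at h) hgeo
      have hVφ : Tendsto (fun k => ‖c (x (φ k)) - z (φ k)‖) atTop (𝓝 0) :=
        hVt.comp hφm.tendsto_atTop
      have hsum : Tendsto (fun k => ‖c (x (φ k)) - z (φ k)‖ + ‖c (x (φ k)) - c xstar‖)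
          atTop (𝓝 0) := by
        simpa using hVφ.add (tendsto_iff_norm_sub_tendsto_zero.mp hcx)
      rw [tendsto_iff_norm_sub_tendsto_zero]
      refine squeeze_zero (fun k => norm_nonneg _) (fun k => ?_) hsum
      calc ‖z (φ k) - c xstar‖
          ≤ ‖z (φ k) - c (x (φ k))‖ + ‖c (x (φ k)) - c xstar‖ :=
            norm_sub_le_norm_sub_add_norm_sub _ _ _
        _ = ‖c (x (φ k)) - z (φ k)‖ + ‖c (x (φ k)) - c xstar‖ := by rw [norm_sub_rev]
    · -- μ → 0
      push_neg at hconst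
      have hμdec : ∀ K, ∃ k, K ≤ k ∧ μ (k + 1) = κ * μ k := by
        intro K
        obtain ⟨k, hk1, hk2⟩ := hconst (max K 1)
        refine ⟨k, le_trans (le_max_left _ _) hk1, ?_⟩
        have h2 := hμupd k (le_trans (le_max_right _ _) hk1)
        by_cases hcond : ‖c (x k) - z k‖ ≤ θ * ‖c (x (k - 1)) - z (k - 1)‖
        · rw [if_pos hcond] at h2
          exact absurd h2 hk2
        · rw [if_neg hcond] at h2
          exact h2
      have hsmall : ∀ j, ∃ K, μ K ≤ κ ^ j * μ 0 := by
        intro j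
        induction j with
        | zero => exact ⟨0, by simp⟩
        | succ j ih =>
          obtain ⟨K, hK⟩ := ih
          obtain ⟨k, hk1, hk2⟩ := hμdec K
          refine ⟨k + 1, ?_⟩
          rw [hk2]
          calc κ * μ k ≤ κ * μ K := mul_le_mul_of_nonneg_left (hμa hk1) hκ.1.le
            _ ≤ κ * (κ ^ j * μ 0) := mul_le_mul_of_nonneg_left hK hκ.1.le
            _ = κ ^ (j + 1) * μ 0 := by ring
      have hμt : Tendsto μ atTop (𝓝 0) := by
        rw [Metric.tendsto_atTop]
        intro ε hε
        obtain ⟨j, hj⟩ := exists_pow_lt_of_lt_one (div_pos hε hμ0) hκ.2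
        obtain ⟨K, hK⟩ := hsmall j
        refine ⟨K, fun k hk => ?_⟩
        have h1 : μ k ≤ μ K := hμa hk
        rw [lt_div_iff₀ hμ0] at hj
        rw [Real.dist_eq, sub_zero, abs_of_pos (hμpos k)]
        linarith
      have hμφ : Tendsto (fun k => μ (φ k)) atTop (𝓝 0) := hμt.comp hφm.tendsto_atTop
      -- u = c x + μ • yh → c xstar along φ
      have hsm : Tendsto (fun k => ‖μ (φ k) • yh (φ k)‖) atTop (𝓝 0) := by
        apply squeeze_zero (fun k => norm_nonneg _) (fun k => ?_)
          (by simpa using hμφ.mul_const M)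
        rw [norm_smul, Real.norm_eq_abs, abs_of_pos (hμpos _)]
        exact mul_le_mul_of_nonneg_left (hM _ (hyh _)) (hμpos _).le
      have hut : Tendsto (fun k => c (x (φ k)) + μ (φ k) • yh (φ k)) atTop (𝓝 (c xstar)) := by
        have h0 : Tendsto (fun k => μ (φ k) • yh (φ k)) atTop (𝓝 0) := by
          rw [tendsto_iff_norm_sub_tendsto_zero]
          simpa using hsm
        simpa using hcx.add h0
      set U : ℝ := ‖c xstar‖ + 1 with hUdef
      have hU0 : 0 < U := by positivity
      have hev1 : ∀ᶠ k in atTop, ‖c (x (φ k)) + μ (φ k) • yh (φ k)‖ ≤ U := by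
        have h1 := (tendsto_iff_norm_sub_tendsto_zero.mp hut).eventually
          (eventually_lt_nhds (show (0:ℝ) < 1 by norm_num))
        filter_upwards [h1] with k hk
        calc ‖c (x (φ k)) + μ (φ k) • yh (φ k)‖
            ≤ ‖c (x (φ k)) + μ (φ k) • yh (φ k) - c xstar‖ + ‖c xstar‖ := by
              simpa using norm_add_le (c (x (φ k)) + μ (φ k) • yh (φ k) - c xstar) (c xstar)
          _ ≤ 1 + ‖c xstar‖ := by linarith
          _ = U := by rw [hUdef]; ring
      have hev2 : ∀ᶠ k in atTop, 2 * μ (φ k) ≤ γ := by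
        filter_upwards [hμφ.eventually (eventually_lt_nhds (show (0:ℝ) < γ / 2 by linarith))]
          with k hk
        linarith
      set C1 : ℝ := 2 * μ 0 * |gzh - b0| + (‖zh‖ + U) ^ 2 with hC1def
      set Z2 : ℝ := 16 * U ^ 2 + 4 * C1 with hZ2def
      -- bound on ‖z (φ k)‖² eventually
      have hzbd : ∀ᶠ k in atTop, ‖z (φ k)‖ ^ 2 ≤ Z2 := by
        filter_upwards [hev1, hev2] with k hk1 hk2
        set j := φ k with hjdef
        set uu := c (x j) + μ j • yh j with huu
        have hμj := hμpos j
        have hμj0 : μ j ≤ μ 0 := hμa (Nat.zero_le _)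
        -- multiplied prox inequality
        have h1 := hproxr j
        have h1a : (‖z j - uu‖ ^ 2 - ‖zh - uu‖ ^ 2) / (2 * μ j) ≤ gzh - gz j := by
          rw [sub_div]; linarith
        rw [div_le_iff₀ (by linarith)] at h1a
        -- multiplied prox-boundedness
        have h2 := hpbr j
        have h2a : (b0 - gz j) ≤ ‖z j‖ ^ 2 / (2 * γ) := by linarith
        rw [le_div_iff₀ (by linarith)] at h2a
        -- norm inequalities
        have h3 : (‖z j‖ - ‖uu‖) ^ 2 ≤ ‖z j - uu‖ ^ 2 := by
          have h := abs_norm_sub_norm_le (z j) uu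
          nlinarith [mul_self_le_mul_self (abs_nonneg (‖z j‖ - ‖uu‖)) h,
            sq_abs (‖z j‖ - ‖uu‖)]
        have h4 : ‖zh - uu‖ ^ 2 ≤ (‖zh‖ + U) ^ 2 := by
          have h5 : ‖zh - uu‖ ≤ ‖zh‖ + ‖uu‖ := norm_sub_le _ _
          nlinarith [norm_nonneg (zh - uu), norm_nonneg zh, norm_nonneg uu]
        have habs : μ j * (gzh - b0) ≤ μ 0 * |gzh - b0| :=
          le_trans (mul_le_mul_of_nonneg_left (le_abs_self _) hμj.le)
            (mul_le_mul_of_nonneg_right hμj0 (abs_nonneg _))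
        -- combine: multiply h1a by γ, h2a by μ j
        have key : γ * ‖z j - uu‖ ^ 2 ≤ μ j * ‖z j‖ ^ 2 + 2 * μ j * γ * (gzh - b0)
            + γ * ‖zh - uu‖ ^ 2 := by
          nlinarith [mul_le_mul_of_nonneg_left h1a (le_of_lt hγ),
            mul_le_mul_of_nonneg_left h2a (le_of_lt hμj)]
        have hγz : (γ - 2 * μ j) * ‖z j‖ ^ 2 ≥ 0 :=
          mul_nonneg (by linarith) (sq_nonneg _)
        -- γ * (‖z‖²/2) bound chain; conclude γ * (‖z‖² - Z2) ≤ 0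
        have hfin : γ * (‖z j‖ ^ 2 - Z2) ≤ 0 := by
          simp only [hZ2def, hC1def]
          nlinarith [key, hγz,
            mul_le_mul_of_nonneg_left h3 (le_of_lt hγ),
            mul_le_mul_of_nonneg_left h4 (le_of_lt hγ),
            mul_le_mul_of_nonneg_left habs (le_of_lt hγ),
            mul_nonneg (le_of_lt hγ) (sq_nonneg (‖z j‖ - 4 * U)),
            mul_nonneg (le_of_lt hγ) (sq_nonneg ‖uu‖),
            mul_nonneg (le_of_lt hγ)
              (mul_nonneg (norm_nonneg (z j)) (sub_nonneg.mpr hk1))]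
        nlinarith
      -- lower bound on gz eventually
      have hlb : ∀ᶠ k in atTop, b0 - Z2 / (2 * γ) ≤ gz (φ k) := by
        filter_upwards [hzbd] with k hk
        have h1 := hpbr (φ k)
        have h2 : ‖z (φ k)‖ ^ 2 / (2 * γ) ≤ Z2 / (2 * γ) :=
          div_le_div_of_nonneg_right hk (by linarith) |>.trans_eq rfl
        linarith
      -- quadratic term → 0
      set C2 : ℝ := B - (f xstar - 1) + μ 0 / 2 * M ^ 2 - (b0 - Z2 / (2 * γ)) with hC2def
      have hquad : Tendsto (fun k => ‖c (x (φ k)) + μ (φ k) • yh (φ k) - z (φ k)‖ ^ 2)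
          atTop (𝓝 0) := by
        have hb1 : ∀ᶠ k in atTop, ‖c (x (φ k)) + μ (φ k) • yh (φ k) - z (φ k)‖ ^ 2
            ≤ 2 * μ (φ k) * C2 := by
          filter_upwards [hev3, hlb] with k hk3 hklb
          have h1 := hBr (φ k)
          have h3 : ‖yh (φ k)‖ ≤ M := hM _ (hyh (φ k))
          have h4 : μ (φ k) ≤ μ 0 := hμa (Nat.zero_le _)
          have hμk := hμpos (φ k)
          have hy2 : ‖yh (φ k)‖ ^ 2 ≤ M ^ 2 := by
            nlinarith [norm_nonneg (yh (φ k))]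
          have h5 : μ (φ k) / 2 * ‖yh (φ k)‖ ^ 2 ≤ μ 0 / 2 * M ^ 2 := by
            nlinarith [mul_nonneg (sub_nonneg.mpr h4) (sq_nonneg M),
              mul_nonneg hμk.le (sub_nonneg.mpr hy2)]
          have h6 : ‖c (x (φ k)) + μ (φ k) • yh (φ k) - z (φ k)‖ ^ 2 / (2 * μ (φ k)) ≤ C2 := by
            simp only [hC2def]; linarith
          rw [div_le_iff₀ (by linarith)] at h6
          linarith [h6]
        have hb2 : Tendsto (fun k => 2 * μ (φ k) * C2) atTop (𝓝 0) := by
          have := (hμφ.const_mul 2).mul_const C2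
          simpa using this
        exact squeeze_zero' (Eventually.of_forall fun k => sq_nonneg _) hb1 hb2
      have hqn : Tendsto (fun k => ‖c (x (φ k)) + μ (φ k) • yh (φ k) - z (φ k)‖)
          atTop (𝓝 0) := by
        have h := hquad.sqrt
        simp only [Real.sqrt_zero] at h
        convert h using 2 with k
        rw [Real.sqrt_sq (norm_nonneg _)]
      have hsum : Tendsto (fun k => ‖c (x (φ k)) + μ (φ k) • yh (φ k) - z (φ k)‖
          + ‖c (x (φ k)) + μ (φ k) • yh (φ k) - c xstar‖) atTop (𝓝 0) := by
        simpa using hqn.add (tendsto_iff_norm_sub_tendsto_zero.mp hut)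
      rw [tendsto_iff_norm_sub_tendsto_zero]
      refine squeeze_zero (fun k => norm_nonneg _) (fun k => ?_) hsum
      calc ‖z (φ k) - c xstar‖
          ≤ ‖z (φ k) - (c (x (φ k)) + μ (φ k) • yh (φ k))‖
            + ‖(c (x (φ k)) + μ (φ k) • yh (φ k)) - c xstar‖ :=
            norm_sub_le_norm_sub_add_norm_sub _ _ _
        _ = ‖c (x (φ k)) + μ (φ k) • yh (φ k) - z (φ k)‖
            + ‖c (x (φ k)) + μ (φ k) • yh (φ k) - c xstar‖ := by rw [norm_sub_rev]
  -- endgame: lower semicontinuity contradicts the upper bound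
  have hlt : (C : EReal) < g (c xstar) := by rw [htop]; exact EReal.coe_lt_top C
  have hev := htendz.eventually (hglsc (c xstar) (C : EReal) hlt)
  obtain ⟨k, hk1, hk2⟩ := (hev.and hub).exists
  rw [hgz (φ k), gt_iff_lt, EReal.coe_lt_coe_iff] at hk1
  linarith


end
end

section
/- Consider sequences generated by the safeguarded implicit AL method for problem (P). If the penalty parameters {μ_k} are bounded away from zero and dom g is closed, then every accumulation point x* of {xᵏ} is feasible for (P), i.e., c(x*) ∈ dom g. -/
open Filter Topology Bornology

noncomputable section

variable {H : Type*} [NormedAddCommGroup H] [InnerProductSpace ℝ H]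

/-- If the penalty parameters stay bounded away from zero and dom g is
closed, every accumulation point of the safeguarded implicit AL method is feasible. -/
theorem mu_bounded_away_domg_closed_implies_feasible {n m : ℕ}
    (f : EuclideanSpace ℝ (Fin n) → ℝ)
    (c : EuclideanSpace ℝ (Fin n) → EuclideanSpace ℝ (Fin m))
    (g : EuclideanSpace ℝ (Fin m) → EReal)
    (hf : ContDiff ℝ 1 f) (hc : ContDiff ℝ 1 c)
    (hgproper : ∃ z, g z ≠ ⊤) (hgbot : ∀ z, g z ≠ ⊥)
    (hglsc : LowerSemicontinuous g) (hgpb : ProxBounded g)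
    (hbdd : ∃ b : ℝ, ∀ x, (b : EReal) ≤ (f x : EReal) + g (c x))
    -- parameters of the safeguarded implicit AL method
    (θ κ : ℝ) (hθ : θ ∈ Set.Ioo (0 : ℝ) 1) (hκ : κ ∈ Set.Ioo (0 : ℝ) 1)
    (Y : Set (EuclideanSpace ℝ (Fin m))) (hYne : Y.Nonempty) (hYbdd : IsBounded Y)
    -- iterates of the method
    (x : ℕ → EuclideanSpace ℝ (Fin n))
    (z yh y : ℕ → EuclideanSpace ℝ (Fin m))
    (μ etol : ℕ → ℝ)
    (hμ0 : 0 < μ 0)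
    (hyh : ∀ k, yh k ∈ Y)
    (hetol : ∀ k, 0 ≤ etol k)
    (hz : ∀ k, z k ∈ proxSet g (μ k) (c (x k) + μ k • yh k))
    (hy : ∀ k, y k = yh k + (μ k)⁻¹ • (c (x k) - z k))
    (hdual : ∀ k, ‖gradient f (x k) +
        ContinuousLinearMap.adjoint (fderiv ℝ c (x k)) (y k)‖ ≤ etol k)
    (hμ1 : μ 1 = μ 0)
    (hμupd : ∀ k, 1 ≤ k →
      μ (k + 1) =
        if ‖c (x k) - z k‖ ≤ θ * ‖c (x (k - 1)) - z (k - 1)‖ then μ k else κ * μ k)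
    -- penalty parameters bounded away from zero
    (hμlo : ∃ mlo > (0 : ℝ), ∀ k, mlo ≤ μ k)
    -- dom g closed
    (hdomcl : IsClosed {w : EuclideanSpace ℝ (Fin m) | g w ≠ ⊤})
    (xstar : EuclideanSpace ℝ (Fin n))
    (hacc : ∃ φ : ℕ → ℕ, StrictMono φ ∧ Tendsto (fun k => x (φ k)) atTop (𝓝 xstar)) :
    g (c xstar) ≠ ⊤ := by
  classical
  obtain ⟨mlo, hmlo, hlo⟩ := hμlo
  obtain ⟨φ, hφmono, hφtend⟩ := hacc
  have μpos : ∀ k, 0 < μ k := fun k => lt_of_lt_of_le hmlo (hlo k)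
  set V : ℕ → ℝ := fun k => ‖c (x k) - z k‖ with hV
  -- μ is antitone from index 1 on
  have hstep : ∀ k, 1 ≤ k → μ (k + 1) ≤ μ k := by
    intro k hk
    rw [hμupd k hk]
    split_ifs
    · exact le_refl _
    · nlinarith [μpos k, hκ.1.le, hκ.2]
  have hanti : ∀ a b : ℕ, 1 ≤ a → a ≤ b → μ b ≤ μ a := by
    intro a b ha hab
    induction b with
    | zero => omega
    | succ b ih =>
      rcases Nat.lt_or_ge a (b + 1) with h | h
      · exact le_trans (hstep b (by omega)) (ih (by omega))
      · have : a = b + 1 := by omega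
        rw [this]
  -- eventually the test `V k ≤ θ V (k-1)` holds
  have hK : ∃ K, 1 ≤ K ∧ ∀ k, K ≤ k → V k ≤ θ * V (k - 1) := by
    by_contra hcon
    push_neg at hcon
    have hchain : ∀ j : ℕ, ∃ k, 1 ≤ k ∧ μ k ≤ κ ^ j * μ 1 := by
      intro j
      induction j with
      | zero => exact ⟨1, le_refl _, by simp⟩
      | succ j ih =>
        obtain ⟨k, hk1, hkμ⟩ := ih
        obtain ⟨k', hk', hdec⟩ := hcon k hk1
        have hk'1 : 1 ≤ k' := le_trans hk1 hk'
        refine ⟨k' + 1, by omega, ?_⟩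
        have hupd := hμupd k' hk'1
        rw [if_neg (not_le_of_gt hdec)] at hupd
        have hμk' : μ k' ≤ μ k := hanti k k' hk1 hk'
        calc μ (k' + 1) = κ * μ k' := hupd
          _ ≤ κ * (κ ^ j * μ 1) := by
              exact mul_le_mul_of_nonneg_left (le_trans hμk' hkμ) hκ.1.le
          _ = κ ^ (j + 1) * μ 1 := by ring
    -- pick j with κ^j * μ 1 < mlo
    obtain ⟨j, hj⟩ := exists_pow_lt_of_lt_one (div_pos hmlo (μpos 1)) hκ.2
    obtain ⟨k, _, hkμ⟩ := hchain j
    have : μ k < mlo := by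
      have h2 : κ ^ j * μ 1 < mlo := by
        have := mul_lt_mul_of_pos_right hj (μpos 1)
        rwa [div_mul_cancel₀ _ (ne_of_gt (μpos 1))] at this
      exact lt_of_le_of_lt hkμ h2
    exact absurd (hlo k) (not_le_of_gt this)
  obtain ⟨K, hK1, hKtest⟩ := hK
  -- geometric decay: V (K + j) ≤ θ^j * V K
  have hgeo : ∀ j : ℕ, V (K + j) ≤ θ ^ j * V K := by
    intro j
    induction j with
    | zero => simp
    | succ j ih =>
      have h1 : V (K + j + 1) ≤ θ * V (K + j) := by
        have := hKtest (K + j + 1) (by omega)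
        simpa using this
      calc V (K + (j + 1)) = V (K + j + 1) := by ring_nf
        _ ≤ θ * V (K + j) := h1
        _ ≤ θ * (θ ^ j * V K) := mul_le_mul_of_nonneg_left ih hθ.1.le
        _ = θ ^ (j + 1) * V K := by ring
  have hVnonneg : ∀ k, 0 ≤ V k := fun k => norm_nonneg _
  have hVtend : Tendsto V atTop (𝓝 0) := by
    rw [← tendsto_add_atTop_iff_nat K]
    apply squeeze_zero (fun j => hVnonneg _) (fun j => by
      simpa [add_comm] using hgeo j)
    have h0 : Tendsto (fun j : ℕ => θ ^ j * V K) atTop (𝓝 (0 * V K)) :=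
      (tendsto_pow_atTop_nhds_zero_of_lt_one hθ.1.le hθ.2).mul_const _
    simpa using h0
  -- z k belongs to dom g
  obtain ⟨z0, hz0⟩ := hgproper
  have hzdom : ∀ k, g (z k) ≠ ⊤ := by
    intro k htop
    have h1 := hz k z0
    rw [htop] at h1
    have hne : g z0 + ((‖z0 - (c (x k) + μ k • yh k)‖ ^ 2 / (2 * μ k) : ℝ) : EReal) ≠ ⊤ :=
      ne_of_lt (EReal.add_lt_top hz0 (EReal.coe_ne_top _))
    have hlhs : (⊤ : EReal) + ((‖z k - (c (x k) + μ k • yh k)‖ ^ 2 / (2 * μ k) : ℝ) : EReal)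
        = ⊤ := EReal.top_add_of_ne_bot (EReal.coe_ne_bot _)
    rw [hlhs] at h1
    exact hne (top_le_iff.mp h1)
  -- limits along the subsequence
  have hφatTop : Tendsto φ atTop atTop := hφmono.tendsto_atTop
  have hctend : Tendsto (fun k => c (x (φ k))) atTop (𝓝 (c xstar)) :=
    (hc.continuous.tendsto _).comp hφtend
  have hdiff : Tendsto (fun k => c (x (φ k)) - z (φ k)) atTop (𝓝 0) := by
    rw [tendsto_zero_iff_norm_tendsto_zero]
    exact (hVtend.comp hφatTop)
  have hztend : Tendsto (fun k => z (φ k)) atTop (𝓝 (c xstar)) := by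
    have := hctend.sub hdiff
    simpa using this
  have hmem : c xstar ∈ {w : EuclideanSpace ℝ (Fin m) | g w ≠ ⊤} :=
    hdomcl.mem_of_tendsto hztend (Filter.Eventually.of_forall fun k => hzdom (φ k))
  exact hmem

end
end

section
/- Consider sequences generated by the safeguarded implicit AL method for problem (P). If the penalty parameters {μ_k} are bounded away from zero and the descent condition L_{μ_k}(xᵏ, ŷᵏ) ≤ L_{μ_k}(xᵏ⁻¹, ŷᵏ) holds for all k ∈ ℕ, where L_μ(x, y) := f(x) + inf_z { g(z) + ⟨y, c(x) − z⟩ + ‖c(x) − z‖²/(2μ) }, then every accumulation point x* of {xᵏ} is feasible for (P), i.e., c(x*) ∈ dom g. -/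
open Filter Topology Bornology

noncomputable section

variable {H : Type*} [NormedAddCommGroup H] [InnerProductSpace ℝ H]

/-- If the penalty parameters stay bounded away from zero and the
implicit AL function decreases along the iterates, every accumulation point is feasible. -/
theorem mu_bounded_away_AL_descent_implies_feasible {n m : ℕ}
    (f : EuclideanSpace ℝ (Fin n) → ℝ)
    (c : EuclideanSpace ℝ (Fin n) → EuclideanSpace ℝ (Fin m))
    (g : EuclideanSpace ℝ (Fin m) → EReal)
    (hf : ContDiff ℝ 1 f) (hc : ContDiff ℝ 1 c)
    (hgproper : ∃ z, g z ≠ ⊤) (hgbot : ∀ z, g z ≠ ⊥)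
    (hglsc : LowerSemicontinuous g) (hgpb : ProxBounded g)
    (hbdd : ∃ b : ℝ, ∀ x, (b : EReal) ≤ (f x : EReal) + g (c x))
    -- parameters of the safeguarded implicit AL method
    (θ κ : ℝ) (hθ : θ ∈ Set.Ioo (0 : ℝ) 1) (hκ : κ ∈ Set.Ioo (0 : ℝ) 1)
    (Y : Set (EuclideanSpace ℝ (Fin m))) (hYne : Y.Nonempty) (hYbdd : IsBounded Y)
    -- iterates of the method
    (x : ℕ → EuclideanSpace ℝ (Fin n))
    (z yh y : ℕ → EuclideanSpace ℝ (Fin m))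
    (μ etol : ℕ → ℝ)
    (hμ0 : 0 < μ 0)
    (hyh : ∀ k, yh k ∈ Y)
    (hetol : ∀ k, 0 ≤ etol k)
    (hz : ∀ k, z k ∈ proxSet g (μ k) (c (x k) + μ k • yh k))
    (hy : ∀ k, y k = yh k + (μ k)⁻¹ • (c (x k) - z k))
    (hdual : ∀ k, ‖gradient f (x k) +
        ContinuousLinearMap.adjoint (fderiv ℝ c (x k)) (y k)‖ ≤ etol k)
    (hμ1 : μ 1 = μ 0)
    (hμupd : ∀ k, 1 ≤ k →
      μ (k + 1) =
        if ‖c (x k) - z k‖ ≤ θ * ‖c (x (k - 1)) - z (k - 1)‖ then μ k else κ * μ k)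
    -- penalty parameters bounded away from zero
    (hμlo : ∃ mlo > (0 : ℝ), ∀ k, mlo ≤ μ k)
    -- descent condition  L_{μ_k}(xᵏ, ŷᵏ) ≤ L_{μ_k}(xᵏ⁻¹, ŷᵏ)  for all k
    (hdesc : ∀ k : ℕ,
      ((f (x (k + 1)) : EReal) + ⨅ w, (g w +
          (((inner ℝ (yh (k + 1)) (c (x (k + 1)) - w) : ℝ)
            + ‖c (x (k + 1)) - w‖ ^ 2 / (2 * μ (k + 1)) : ℝ) : EReal))) ≤
      ((f (x k) : EReal) + ⨅ w, (g w +
          (((inner ℝ (yh (k + 1)) (c (x k) - w) : ℝ)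
            + ‖c (x k) - w‖ ^ 2 / (2 * μ (k + 1)) : ℝ) : EReal))))
    (xstar : EuclideanSpace ℝ (Fin n))
    (hacc : ∃ φ : ℕ → ℕ, StrictMono φ ∧ Tendsto (fun k => x (φ k)) atTop (𝓝 xstar)) :
    g (c xstar) ≠ ⊤ := by
  classical
  obtain ⟨mlo, hmlo_pos, hmlo⟩ := hμlo
  obtain ⟨ψ, hψmono, hψtend⟩ := hacc
  have hμpos : ∀ k, 0 < μ k := fun k => lt_of_lt_of_le hmlo_pos (hmlo k)
  -- μ is nonincreasing from index 1 on
  have hstep : ∀ k, 1 ≤ k → μ (k + 1) ≤ μ k := by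
    intro k hk
    rw [hμupd k hk]
    split
    · exact le_rfl
    · nlinarith [hμpos k, hκ.1, hκ.2]
  have hmono : ∀ a, 1 ≤ a → ∀ b, a ≤ b → μ b ≤ μ a := by
    intro a ha b hab
    induction b, hab using Nat.le_induction with
    | base => exact le_rfl
    | succ n hn ih => exact le_trans (hstep n (le_trans ha hn)) ih
  have hμle0 : ∀ k, μ k ≤ μ 0 := by
    intro k
    rcases Nat.eq_zero_or_pos k with hk | hk
    · simp [hk]
    · calc μ k ≤ μ 1 := hmono 1 le_rfl k hk
        _ = μ 0 := hμ1
  -- eventually the V-decrease test succeeds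
  have hev : ∃ K, 1 ≤ K ∧ ∀ k, K ≤ k →
      ‖c (x k) - z k‖ ≤ θ * ‖c (x (k - 1)) - z (k - 1)‖ := by
    by_contra h
    push_neg at h
    have hfreq : ∃ᶠ k in atTop, 1 ≤ k ∧
        θ * ‖c (x (k - 1)) - z (k - 1)‖ < ‖c (x k) - z k‖ := by
      rw [Filter.frequently_atTop]
      intro N
      obtain ⟨k, hkN, hk⟩ := h (max N 1) (le_max_right _ _)
      exact ⟨k, le_trans (le_max_left _ _) hkN, le_trans (le_max_right _ _) hkN, hk⟩
    obtain ⟨χ, hχmono, hχp⟩ := Filter.extraction_of_frequently_atTop hfreq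
    have hdec : ∀ n, μ (χ n + 1) = κ * μ (χ n) := by
      intro n
      rw [hμupd (χ n) (hχp n).1, if_neg (not_le.2 (hχp n).2)]
    have hgeom : ∀ n, μ (χ n + 1) ≤ κ ^ (n + 1) * μ 0 := by
      intro n
      induction n with
      | zero =>
        rw [hdec 0, pow_one]
        exact mul_le_mul_of_nonneg_left (hμle0 _) (le_of_lt hκ.1)
      | succ m ih =>
        have h1 : μ (χ (m + 1)) ≤ μ (χ m + 1) :=
          hmono (χ m + 1) (by omega) (χ (m + 1)) (hχmono (Nat.lt_succ_self m))
        calc μ (χ (m + 1) + 1) = κ * μ (χ (m + 1)) := hdec (m + 1)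
          _ ≤ κ * (κ ^ (m + 1) * μ 0) :=
            mul_le_mul_of_nonneg_left (le_trans h1 ih) (le_of_lt hκ.1)
          _ = κ ^ (m + 2) * μ 0 := by ring
    obtain ⟨n, hn⟩ := exists_pow_lt_of_lt_one (div_pos hmlo_pos (hμpos 0)) hκ.2
    have h2 : κ ^ (n + 1) ≤ κ ^ n :=
      pow_le_pow_of_le_one (le_of_lt hκ.1) (le_of_lt hκ.2) (Nat.le_succ n)
    have h3 : mlo ≤ κ ^ (n + 1) * μ 0 := le_trans (hmlo _) (hgeom n)
    have h4 : κ ^ n * μ 0 < mlo := by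
      have := (lt_div_iff₀ (hμpos 0)).1 hn
      linarith [this]
    nlinarith [hμpos 0]
  obtain ⟨K, hK1, hKdec⟩ := hev
  -- geometric decay of V
  have hVgeom : ∀ j, ‖c (x (K + j)) - z (K + j)‖ ≤ θ ^ j * ‖c (x K) - z K‖ := by
    intro j
    induction j with
    | zero => simp
    | succ m ih =>
      have h1 := hKdec (K + m + 1) (by omega)
      have h2 : K + m + 1 - 1 = K + m := by omega
      rw [h2] at h1
      calc ‖c (x (K + (m + 1))) - z (K + (m + 1))‖
          = ‖c (x (K + m + 1)) - z (K + m + 1)‖ := by ring_nf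
        _ ≤ θ * ‖c (x (K + m)) - z (K + m)‖ := h1
        _ ≤ θ * (θ ^ m * ‖c (x K) - z K‖) :=
            mul_le_mul_of_nonneg_left ih (le_of_lt hθ.1)
        _ = θ ^ (m + 1) * ‖c (x K) - z K‖ := by ring
  have hVto : Tendsto (fun k => ‖c (x k) - z k‖) atTop (𝓝 0) := by
    rw [← tendsto_add_atTop_iff_nat K]
    have hb : Tendsto (fun j : ℕ => θ ^ j * ‖c (x K) - z K‖) atTop (𝓝 0) := by
      have := (tendsto_pow_atTop_nhds_zero_of_lt_one (le_of_lt hθ.1) hθ.2).mul_const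
        (‖c (x K) - z K‖)
      simpa using this
    refine squeeze_zero (fun n => norm_nonneg _) (fun n => ?_) hb
    simpa [add_comm] using hVgeom n
  -- along the subsequence, z → c xstar
  have hψatTop : Tendsto ψ atTop atTop := hψmono.tendsto_atTop
  have hcx : Tendsto (fun k => c (x (ψ k))) atTop (𝓝 (c xstar)) :=
    (hc.continuous.tendsto xstar).comp hψtend
  have hVψ : Tendsto (fun k => ‖c (x (ψ k)) - z (ψ k)‖) atTop (𝓝 0) :=
    hVto.comp hψatTop
  have hdiff : Tendsto (fun k => c (x (ψ k)) - z (ψ k)) atTop (𝓝 0) :=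
    tendsto_zero_iff_norm_tendsto_zero.2 hVψ
  have hztend : Tendsto (fun k => z (ψ k)) atTop (𝓝 (c xstar)) := by
    have := hcx.sub hdiff
    simpa using this
  -- fixed point of dom g
  obtain ⟨w0, hw0⟩ := hgproper
  set r : ℝ := (g w0).toReal with hr
  have hgw0 : ((r : EReal)) = g w0 := EReal.coe_toReal hw0 (hgbot w0)
  -- bound on Y
  obtain ⟨R, hR⟩ := isBounded_iff_forall_norm_le.1 hYbdd
  have hR0 : 0 ≤ R := by
    obtain ⟨y0, hy0⟩ := hYne
    exact le_trans (norm_nonneg y0) (hR y0 hy0)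
  -- eventual bound on g (z (ψ k))
  set S : ℝ := ‖w0‖ + (‖c xstar‖ + 1) + μ 0 * R with hSdef
  set C : ℝ := S ^ 2 / (2 * mlo) with hCdef
  set M : ℝ := r + C with hMdef
  have hEclose : ∀ᶠ k in atTop, ‖c (x (ψ k)) - c xstar‖ < 1 := by
    have := hcx (Metric.ball_mem_nhds (c xstar) one_pos)
    simpa [Metric.mem_ball, dist_eq_norm] using this
  have hgbound : ∀ᶠ k in atTop, g (z (ψ k)) ≤ (M : EReal) := by
    filter_upwards [hEclose] with k hk
    set j := ψ k
    set u := c (x j) + μ j • yh j with hu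
    have hprox := hz j w0
    have ha : (0 : ℝ) ≤ ‖z j - u‖ ^ 2 / (2 * μ j) :=
      div_nonneg (sq_nonneg _) (by linarith [hμpos j])
    have h1 : g (z j) ≤ g (z j) + ((‖z j - u‖ ^ 2 / (2 * μ j) : ℝ) : EReal) := by
      nth_rewrite 1 [show g (z j) = g (z j) + (0 : EReal) by rw [add_zero]]
      exact add_le_add_right (by exact_mod_cast ha) _
    have hnorm : ‖w0 - u‖ ≤ S := by
      have h2 : ‖c (x j)‖ ≤ ‖c xstar‖ + 1 := by
        have := norm_sub_norm_le (c (x j)) (c xstar)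
        have hk' : ‖c (x j) - c xstar‖ < 1 := hk
        linarith
      have h3 : ‖μ j • yh j‖ ≤ μ 0 * R := by
        rw [norm_smul, Real.norm_eq_abs, abs_of_pos (hμpos j)]
        exact mul_le_mul (hμle0 j) (hR _ (hyh j)) (norm_nonneg _) (le_of_lt hμ0)
      calc ‖w0 - u‖ ≤ ‖w0‖ + ‖u‖ := norm_sub_le _ _
        _ ≤ ‖w0‖ + (‖c (x j)‖ + ‖μ j • yh j‖) := by
            gcongr; exact norm_add_le _ _
        _ ≤ S := by rw [hSdef]; linarith
    have hb : ‖w0 - u‖ ^ 2 / (2 * μ j) ≤ C := by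
      rw [hCdef]
      apply div_le_div₀ (sq_nonneg S)
        (pow_le_pow_left₀ (norm_nonneg _) hnorm 2)
        (by linarith) (by linarith [hmlo j])
    have h4 : g w0 + ((‖w0 - u‖ ^ 2 / (2 * μ j) : ℝ) : EReal) ≤ (M : EReal) := by
      rw [← hgw0, hMdef]
      rw [show ((r + C : ℝ) : EReal) = (r : EReal) + (C : EReal) by exact_mod_cast rfl]
      exact add_le_add_right (by exact_mod_cast hb) _
    exact le_trans h1 (le_trans hprox h4)
  -- conclude by lower semicontinuity
  intro htop
  have hlt : (M : EReal) < g (c xstar) := by rw [htop]; exact EReal.coe_lt_top M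
  have hev2 : ∀ᶠ w in 𝓝 (c xstar), (M : EReal) < g w := hglsc (c xstar) M hlt
  have hev3 : ∀ᶠ k in atTop, (M : EReal) < g (z (ψ k)) := hztend.eventually hev2
  obtain ⟨k, hk1, hk2⟩ := (hev3.and hgbound).exists
  exact absurd hk2 (not_le.2 hk1)

end
end

section
/- Suppose g = δ_D is the indicator of a nonempty closed set D ⊆ ℝᵐ. Consider sequences generated by the safeguarded implicit AL method for problem (P), let x* be an accumulation point of {xᵏ}, and let {xᵏ}_{k∈K} be a subsequence with xᵏ → x* along K. If c(x*) lies in the interior of D, then yᵏ = 0 for all k ∈ K sufficiently large. -/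
open Filter Topology Bornology

noncomputable section

variable {H : Type*} [NormedAddCommGroup H] [InnerProductSpace ℝ H]

lemma eq_of_mem_interior_of_min_dist {E : Type*} [NormedAddCommGroup E] [NormedSpace ℝ E]
    {D : Set E} {Z U : E} (hZ : Z ∈ interior D)
    (hmin : ∀ w ∈ D, ‖Z - U‖ ≤ ‖w - U‖) : Z = U := by
  by_contra hne
  have hd : 0 < ‖Z - U‖ := norm_pos_iff.mpr (sub_ne_zero.mpr hne)
  obtain ⟨ε, hε, hball⟩ := Metric.mem_nhds_iff.mp (mem_interior_iff_mem_nhds.mp hZ)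
  set d := ‖Z - U‖ with hdd
  set t : ℝ := min (1/2) (ε / (2 * d)) with ht
  have ht0 : 0 < t := lt_min (by norm_num) (by positivity)
  have ht1 : t ≤ 1/2 := min_le_left _ _
  set w : E := Z + t • (U - Z) with hw
  have hwD : w ∈ D := by
    apply hball
    have : ‖w - Z‖ = t * d := by
      simp [hw, norm_smul, abs_of_pos ht0, hdd, norm_sub_rev U Z]
    refine Metric.mem_ball.mpr ?_
    rw [dist_eq_norm, this]
    calc t * d ≤ (ε / (2 * d)) * d := by
          exact mul_le_mul_of_nonneg_right (min_le_right _ _) hd.le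
      _ = ε / 2 := by field_simp
      _ < ε := by linarith
  have hwU : ‖w - U‖ = (1 - t) * d := by
    have : w - U = (1 - t) • (Z - U) := by
      simp [hw, sub_smul, smul_sub]; abel
    rw [this, norm_smul, Real.norm_eq_abs, abs_of_pos (by linarith : (0:ℝ) < 1 - t)]
  have := hmin w hwD
  rw [hwU] at this
  nlinarith

open Classical

/-- If g is the indicator of a nonempty closed set D and the subsequence
limit satisfies c(x*) ∈ int D, then the multipliers yᵏ vanish along the subsequence
eventually. -/
theorem multipliers_vanish_for_inactive_constraints {n m : ℕ}
    (f : EuclideanSpace ℝ (Fin n) → ℝ)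
    (c : EuclideanSpace ℝ (Fin n) → EuclideanSpace ℝ (Fin m))
    (g : EuclideanSpace ℝ (Fin m) → EReal)
    (hf : ContDiff ℝ 1 f) (hc : ContDiff ℝ 1 c)
    -- g is the indicator of a nonempty closed set D
    (D : Set (EuclideanSpace ℝ (Fin m))) (hDne : D.Nonempty) (hDcl : IsClosed D)
    (hgD : ∀ v, g v = if v ∈ D then (0 : EReal) else ⊤)
    (hbdd : ∃ b : ℝ, ∀ x, (b : EReal) ≤ (f x : EReal) + g (c x))
    -- parameters of the safeguarded implicit AL method
    (θ κ : ℝ) (hθ : θ ∈ Set.Ioo (0 : ℝ) 1) (hκ : κ ∈ Set.Ioo (0 : ℝ) 1)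
    (Y : Set (EuclideanSpace ℝ (Fin m))) (hYne : Y.Nonempty) (hYbdd : IsBounded Y)
    -- iterates of the method
    (x : ℕ → EuclideanSpace ℝ (Fin n))
    (z yh y : ℕ → EuclideanSpace ℝ (Fin m))
    (μ etol : ℕ → ℝ)
    (hμ0 : 0 < μ 0)
    (hyh : ∀ k, yh k ∈ Y)
    (hetol : ∀ k, 0 ≤ etol k)
    (hz : ∀ k, z k ∈ proxSet g (μ k) (c (x k) + μ k • yh k))
    (hy : ∀ k, y k = yh k + (μ k)⁻¹ • (c (x k) - z k))
    (hdual : ∀ k, ‖gradient f (x k) +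
        ContinuousLinearMap.adjoint (fderiv ℝ c (x k)) (y k)‖ ≤ etol k)
    (hμ1 : μ 1 = μ 0)
    (hμupd : ∀ k, 1 ≤ k →
      μ (k + 1) =
        if ‖c (x k) - z k‖ ≤ θ * ‖c (x (k - 1)) - z (k - 1)‖ then μ k else κ * μ k)
    -- accumulation point along a subsequence
    (xstar : EuclideanSpace ℝ (Fin n)) (φ : ℕ → ℕ) (hφ : StrictMono φ)
    (hconv : Tendsto (fun k => x (φ k)) atTop (𝓝 xstar))
    (hint : c xstar ∈ interior D) :
    ∃ k0 : ℕ, ∀ k, k0 ≤ k → y (φ k) = 0 := by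

  classical
  -- positivity and monotonicity of μ
  have hμpos : ∀ k, 0 < μ k := by
    intro k
    induction k with
    | zero => exact hμ0
    | succ k ih =>
      rcases Nat.eq_zero_or_pos k with hk | hk
      · subst hk; rw [hμ1]; exact hμ0
      · rw [hμupd k hk]
        split_ifs
        · exact ih
        · exact mul_pos hκ.1 ih
  have hanti : Antitone μ := by
    apply antitone_nat_of_succ_le
    intro k
    rcases Nat.eq_zero_or_pos k with hk | hk
    · subst hk; rw [hμ1]
    · rw [hμupd k hk]
      split_ifs
      · exact le_refl _
      · nlinarith [hμpos k, hκ.2]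
  obtain ⟨w0, hw0⟩ := hDne
  -- z k ∈ D always
  have hzD : ∀ k, z k ∈ D := by
    intro k
    by_contra hzk
    have h := hz k
    simp only [proxSet, Set.mem_setOf_eq] at h
    have h2 := h w0
    simp [hgD, hzk, hw0, EReal.top_add_coe] at h2
  -- z k is a projection of u k := c (x k) + μ k • yh k onto D
  have hproj : ∀ k, ∀ w ∈ D,
      ‖z k - (c (x k) + μ k • yh k)‖ ≤ ‖w - (c (x k) + μ k • yh k)‖ := by
    intro k w hw
    have h := hz k
    simp only [proxSet, Set.mem_setOf_eq] at h
    have h2 := h w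
    rw [hgD, hgD, if_pos (hzD k), if_pos hw, zero_add, zero_add,
      EReal.coe_le_coe_iff] at h2
    have h3 : ‖z k - (c (x k) + μ k • yh k)‖ ^ 2
        ≤ ‖w - (c (x k) + μ k • yh k)‖ ^ 2 :=
      (div_le_div_iff_of_pos_right (by linarith [hμpos k] : (0:ℝ) < 2 * μ k)).mp h2
    exact (pow_le_pow_iff_left₀ (norm_nonneg _) (norm_nonneg _) two_ne_zero).mp h3
  -- if z k equals the prox center, then y k = 0
  have hy0 : ∀ k, z k = c (x k) + μ k • yh k → y k = 0 := by
    intro k hzu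
    have hc' : c (x k) - z k = -(μ k • yh k) := by rw [hzu]; abel
    rw [hy k, hc', smul_neg, smul_smul, inv_mul_cancel₀ (hμpos k).ne', one_smul]
    abel
  have hcc : Tendsto (fun k => c (x (φ k))) atTop (𝓝 (c xstar)) :=
    (hc.continuous.tendsto xstar).comp hconv
  by_cases hA : ∀ N, ∃ k, N ≤ k ∧ 1 ≤ k ∧
      ¬ (‖c (x k) - z k‖ ≤ θ * ‖c (x (k - 1)) - z (k - 1)‖)
  · -- infinitely many penalty decreases: μ → 0
    have hbdd0 : BddBelow (Set.range μ) :=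
      ⟨0, by rintro _ ⟨k, rfl⟩; exact (hμpos k).le⟩
    have hL : Tendsto μ atTop (𝓝 (⨅ k, μ k)) := tendsto_atTop_ciInf hanti hbdd0
    have hL0 : 0 ≤ ⨅ k, μ k := le_ciInf fun k => (hμpos k).le
    have hLzero : (⨅ k, μ k) = 0 := by
      by_contra hLne
      have hLpos : 0 < ⨅ k, μ k := lt_of_le_of_ne hL0 (Ne.symm hLne)
      have hlt : (⨅ k, μ k) < (⨅ k, μ k) / κ := by
        rw [lt_div_iff₀ hκ.1]; nlinarith [hκ.2]
      have hev : ∀ᶠ k in atTop, μ k < (⨅ k, μ k) / κ :=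
        hL.eventually (eventually_lt_nhds hlt)
      obtain ⟨N, hN⟩ := Filter.eventually_atTop.mp hev
      obtain ⟨k, hkN, hk1, hkc⟩ := hA N
      have h1 : κ * μ k < ⨅ k, μ k := by
        have := hN k hkN
        rw [lt_div_iff₀ hκ.1] at this
        linarith [mul_comm (μ k) κ ▸ this]
      have h2 : (⨅ k, μ k) ≤ μ (k + 1) := ciInf_le hbdd0 (k + 1)
      rw [hμupd k hk1, if_neg hkc] at h2
      linarith
    rw [hLzero] at hL
    have hμφ : Tendsto (fun k => μ (φ k)) atTop (𝓝 0) := hL.comp hφ.tendsto_atTop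
    obtain ⟨M, hM⟩ := isBounded_iff_forall_norm_le.mp hYbdd
    have hsm : Tendsto (fun k => μ (φ k) • yh (φ k)) atTop (𝓝 0) := by
      apply squeeze_zero_norm (a := fun k => μ (φ k) * M)
      · intro k
        rw [norm_smul, Real.norm_eq_abs, abs_of_pos (hμpos _)]
        exact mul_le_mul_of_nonneg_left (hM _ (hyh _)) (hμpos _).le
      · simpa using hμφ.mul_const M
    have hu_t : Tendsto (fun k => c (x (φ k)) + μ (φ k) • yh (φ k)) atTop
        (𝓝 (c xstar)) := by simpa using hcc.add hsm
    have hev : ∀ᶠ k in atTop,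
        c (x (φ k)) + μ (φ k) • yh (φ k) ∈ interior D :=
      hu_t.eventually (isOpen_interior.eventually_mem hint)
    obtain ⟨k0, hk0⟩ := Filter.eventually_atTop.mp hev
    refine ⟨k0, fun k hk => ?_⟩
    apply hy0
    have huD : c (x (φ k)) + μ (φ k) • yh (φ k) ∈ D :=
      interior_subset (hk0 k hk)
    have h := hproj (φ k) _ huD
    rw [sub_self, norm_zero] at h
    exact sub_eq_zero.mp (norm_le_zero_iff.mp h)
  · -- finitely many decreases: V → 0
    push_neg at hA
    obtain ⟨N, hN⟩ := hA
    set K1 := max N 1 with hK1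
    have hcond : ∀ j, ‖c (x (K1 + j + 1)) - z (K1 + j + 1)‖
        ≤ θ * ‖c (x (K1 + j)) - z (K1 + j)‖ := by
      intro j
      have h := hN (K1 + j + 1)
        (le_trans (le_max_left N 1) (by omega)) (by omega)
      simpa using h
    have hgeo : ∀ j, ‖c (x (K1 + j)) - z (K1 + j)‖
        ≤ θ ^ j * ‖c (x K1) - z K1‖ := by
      intro j
      induction j with
      | zero => simp
      | succ j ih =>
        calc ‖c (x (K1 + (j + 1))) - z (K1 + (j + 1))‖
            = ‖c (x (K1 + j + 1)) - z (K1 + j + 1)‖ := by rw [← add_assoc]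
          _ ≤ θ * ‖c (x (K1 + j)) - z (K1 + j)‖ := hcond j
          _ ≤ θ * (θ ^ j * ‖c (x K1) - z K1‖) :=
              mul_le_mul_of_nonneg_left ih hθ.1.le
          _ = θ ^ (j + 1) * ‖c (x K1) - z K1‖ := by ring
    have hVt : Tendsto (fun k => ‖c (x k) - z k‖) atTop (𝓝 0) := by
      have h1 : Tendsto (fun j : ℕ => θ ^ j * ‖c (x K1) - z K1‖) atTop (𝓝 0) := by
        simpa using
          (tendsto_pow_atTop_nhds_zero_of_lt_one hθ.1.le hθ.2).mul_const
            ‖c (x K1) - z K1‖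
      have h2 : Tendsto (fun j => ‖c (x (K1 + j)) - z (K1 + j)‖) atTop (𝓝 0) :=
        squeeze_zero (fun j => norm_nonneg _) hgeo h1
      have h3 : Tendsto (fun j => ‖c (x (j + K1)) - z (j + K1)‖) atTop (𝓝 0) := by
        simpa [add_comm] using h2
      exact (Filter.tendsto_add_atTop_iff_nat K1).mp h3
    have hWt : Tendsto (fun k => c (x k) - z k) atTop (𝓝 0) :=
      tendsto_zero_iff_norm_tendsto_zero.mpr hVt
    have hzt : Tendsto (fun k => z (φ k)) atTop (𝓝 (c xstar)) := by
      have h := hcc.sub (hWt.comp hφ.tendsto_atTop)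
      simpa [sub_sub_cancel] using h
    have hev : ∀ᶠ k in atTop, z (φ k) ∈ interior D :=
      hzt.eventually (isOpen_interior.eventually_mem hint)
    obtain ⟨k0, hk0⟩ := Filter.eventually_atTop.mp hev
    refine ⟨k0, fun k hk => ?_⟩
    apply hy0
    exact eq_of_mem_interior_of_min_dist (hk0 k hk)
      (fun w hw => hproj (φ k) w hw)

end
end

section
/- Suppose dom g is closed. Consider sequences generated by the safeguarded implicit AL method for problem (P) with bounded tolerances {ε_k}. Let x* ∈ ℝⁿ be an accumulation point of {xᵏ}, with xᵏ → x* along a subsequence K. Then x* is M-stationary for the feasibility problem of minimizing dist²(c(x), dom g): there exists z* ∈ dom g such that Jc(x*)ᵀ (c(x*) − z*) = 0 and (c(x*) − z*, 0) ∈ N^lim_{epi g}(z*, g(z*)), where epi g is the epigraph of g. -/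
open Filter Topology Bornology

noncomputable section

variable {H : Type*} [NormedAddCommGroup H] [InnerProductSpace ℝ H]

set_option linter.unusedSectionVars false

lemma mem_limNormalCone_of_proj {H' : Type*} [NormedAddCommGroup H'] [NormedSpace ℝ H']
    {D : Set H'} {p v : H'} (hp : p ∈ D) (h : ∀ q ∈ D, ‖v‖ ≤ ‖q - (p + v)‖) :
    v ∈ limNormalCone D p := by
  refine ⟨fun k => p + ((k : ℝ) + 1)⁻¹ • v, fun _ => p, fun k => (k : ℝ) + 1,
    fun k => by positivity, fun k => ⟨hp, fun u hu => ?_⟩, ?_, ?_⟩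
  · have ht0 : (0:ℝ) < ((k : ℝ) + 1)⁻¹ := by positivity
    have ht1 : ((k : ℝ) + 1)⁻¹ ≤ 1 := by
      rw [inv_le_one_iff₀]; right; linarith [Nat.cast_nonneg (α := ℝ) k]
    have h1 : ‖p - (p + ((k : ℝ) + 1)⁻¹ • v)‖ = ((k : ℝ) + 1)⁻¹ * ‖v‖ := by
      rw [show p - (p + ((k : ℝ) + 1)⁻¹ • v) = -(((k : ℝ) + 1)⁻¹ • v) by abel,
        norm_neg, norm_smul, Real.norm_eq_abs, abs_of_pos ht0]
    have h2 : ‖v‖ ≤ ‖u - (p + v)‖ := h u hu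
    have h3 : u - (p + v) = (u - (p + ((k : ℝ) + 1)⁻¹ • v)) - (1 - ((k : ℝ) + 1)⁻¹) • v := by
      rw [sub_smul, one_smul]; abel
    have h4 : ‖u - (p + v)‖ ≤ ‖u - (p + ((k : ℝ) + 1)⁻¹ • v)‖ + (1 - ((k : ℝ) + 1)⁻¹) * ‖v‖ := by
      rw [h3]
      refine (norm_sub_le _ _).trans ?_
      rw [norm_smul, Real.norm_eq_abs, abs_of_nonneg (by linarith)]
    rw [h1]
    nlinarith [norm_nonneg v]
  · have : Tendsto (fun k : ℕ => ((k : ℝ) + 1)⁻¹ • v) atTop (𝓝 ((0:ℝ) • v)) := by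
      refine Tendsto.smul_const ?_ v
      simpa [one_div] using tendsto_one_div_add_atTop_nhds_zero_nat (𝕜 := ℝ)
    simpa using tendsto_const_nhds.add this
  · have : ∀ k : ℕ, ((k : ℝ) + 1) • (p + ((k : ℝ) + 1)⁻¹ • v - p) = v := by
      intro k
      have hk : ((k : ℝ) + 1) ≠ 0 := by positivity
      rw [add_sub_cancel_left, smul_smul, mul_inv_cancel₀ hk, one_smul]
    rw [show (fun k : ℕ => ((k : ℝ) + 1) • (p + ((k : ℝ) + 1)⁻¹ • v - p)) = fun _ => v
      from funext this]
    exact tendsto_const_nhds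

lemma prox_ne_top {g : H → EReal} {γ : ℝ} {u z : H} (hz : z ∈ proxSet g γ u) {w : H}
    (hw : g w ≠ ⊤) : g z ≠ ⊤ := by
  intro h
  have h1 := hz w
  rw [h, EReal.top_add_coe, top_le_iff] at h1
  exact absurd h1 (EReal.add_lt_top hw (EReal.coe_ne_top _)).ne

lemma prox_real {g : H → EReal} (hgbot : ∀ z, g z ≠ ⊥) {γ : ℝ} {u z : H}
    (hz : z ∈ proxSet g γ u) {w : H} (hw : g w ≠ ⊤) :
    (g z).toReal + ‖z - u‖ ^ 2 / (2 * γ) ≤ (g w).toReal + ‖w - u‖ ^ 2 / (2 * γ) := by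
  have h := hz w
  rw [← EReal.coe_toReal (prox_ne_top hz hw) (hgbot z), ← EReal.coe_toReal hw (hgbot w),
    ← EReal.coe_add, ← EReal.coe_add, EReal.coe_le_coe_iff] at h
  exact h

lemma prox_real_mul {g : H → EReal} (hgbot : ∀ z, g z ≠ ⊥) {γ : ℝ} (hγ : 0 < γ) {u z : H}
    (hz : z ∈ proxSet g γ u) {w : H} (hw : g w ≠ ⊤) :
    2 * γ * (g z).toReal + ‖z - u‖ ^ 2 ≤ 2 * γ * (g w).toReal + ‖w - u‖ ^ 2 := by
  have h := prox_real hgbot hz hw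
  have h2 : (0:ℝ) < 2 * γ := by linarith
  have := mul_le_mul_of_nonneg_left h h2.le
  rw [mul_add, mul_add, mul_div_cancel₀ _ h2.ne', mul_div_cancel₀ _ h2.ne'] at this
  exact this

lemma final_normal {m : ℕ} (g : EuclideanSpace ℝ (Fin m) → EReal)
    (hgbot : ∀ z, g z ≠ ⊥) (cx zstar : EuclideanSpace ℝ (Fin m)) (hztop : g zstar ≠ ⊤)
    (hproj : ∀ w, g w ≠ ⊤ → ‖cx - zstar‖ ≤ ‖w - cx‖) :
    (WithLp.equiv 2 (EuclideanSpace ℝ (Fin m) × ℝ)).symm (cx - zstar, (0 : ℝ)) ∈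
      limNormalCone
        {q : WithLp 2 (EuclideanSpace ℝ (Fin m) × ℝ) |
          g ((WithLp.equiv 2 (EuclideanSpace ℝ (Fin m) × ℝ)) q).1 ≤
            ((((WithLp.equiv 2 (EuclideanSpace ℝ (Fin m) × ℝ)) q).2 : ℝ) : EReal)}
        ((WithLp.equiv 2 (EuclideanSpace ℝ (Fin m) × ℝ)).symm
          (zstar, (g zstar).toReal)) := by
  set e := WithLp.equiv 2 (EuclideanSpace ℝ (Fin m) × ℝ)
  set β := (g zstar).toReal
  apply mem_limNormalCone_of_proj
  · show g ((e) (e.symm (zstar, β))).1 ≤ _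
    rw [Equiv.apply_symm_apply]
    show g zstar ≤ ((β : ℝ) : EReal)
    rw [EReal.coe_toReal hztop (hgbot _)]
  · intro q hq
    set w := (e q).1 with hw
    set α := (e q).2 with hα
    have hqD : g w ≤ ((α : ℝ) : EReal) := hq
    have hwtop : g w ≠ ⊤ := fun h => (EReal.coe_lt_top α).not_ge (h ▸ hqD)
    have hpv : e.symm (zstar, β) + e.symm (cx - zstar, (0:ℝ)) = e.symm (cx, β) := by
      rw [show e.symm (zstar, β) + e.symm (cx - zstar, (0:ℝ)) = e.symm ((zstar, β) + (cx - zstar, (0:ℝ))) from rfl]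
      congr 1
      simp [Prod.ext_iff]
    rw [hpv]
    have hqe : q - e.symm (cx, β) = e.symm ((w - cx, α - β)) := by
      conv_lhs => rw [← e.symm_apply_apply q]
      show e.symm (e q - (cx, β)) = _
      rfl
    rw [hqe]
    have hv : ‖e.symm (cx - zstar, (0:ℝ))‖ = ‖cx - zstar‖ :=
      WithLp.norm_toLp_fst 2 _ _ _
    have hsq : ‖e.symm ((w - cx, α - β))‖ ^ 2 = ‖w - cx‖ ^ 2 + ‖α - β‖ ^ 2 := by
      rw [WithLp.prod_norm_sq_eq_of_L2]
      rfl
    have hn : ‖cx - zstar‖ ≤ ‖w - cx‖ := hproj w hwtop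
    rw [hv]
    have h1 : ‖cx - zstar‖ ^ 2 ≤ ‖e.symm ((w - cx, α - β))‖ ^ 2 := by
      rw [hsq]
      nlinarith [sq_nonneg (‖α - β‖), norm_nonneg (cx - zstar), norm_nonneg (w - cx)]
    exact (pow_le_pow_iff_left₀ (norm_nonneg _) (norm_nonneg _) two_ne_zero).mp h1

set_option maxHeartbeats 2000000

/-- With dom g closed and bounded tolerances, every accumulation point
of the safeguarded implicit AL method is M-stationary for the feasibility problem of
minimizing dist²(c(x), dom g). -/
theorem ALM_accumulation_is_stationary_for_infeasibility {n m : ℕ}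
    (f : EuclideanSpace ℝ (Fin n) → ℝ)
    (c : EuclideanSpace ℝ (Fin n) → EuclideanSpace ℝ (Fin m))
    (g : EuclideanSpace ℝ (Fin m) → EReal)
    (hf : ContDiff ℝ 1 f) (hc : ContDiff ℝ 1 c)
    (hgproper : ∃ z, g z ≠ ⊤) (hgbot : ∀ z, g z ≠ ⊥)
    (hglsc : LowerSemicontinuous g) (hgpb : ProxBounded g)
    (hbdd : ∃ b : ℝ, ∀ x, (b : EReal) ≤ (f x : EReal) + g (c x))
    -- parameters of the safeguarded implicit AL method
    (θ κ : ℝ) (hθ : θ ∈ Set.Ioo (0 : ℝ) 1) (hκ : κ ∈ Set.Ioo (0 : ℝ) 1)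
    (Y : Set (EuclideanSpace ℝ (Fin m))) (hYne : Y.Nonempty) (hYbdd : IsBounded Y)
    -- iterates of the method
    (x : ℕ → EuclideanSpace ℝ (Fin n))
    (z yh y : ℕ → EuclideanSpace ℝ (Fin m))
    (μ etol : ℕ → ℝ)
    (hμ0 : 0 < μ 0)
    (hyh : ∀ k, yh k ∈ Y)
    (hetol : ∀ k, 0 ≤ etol k)
    (hz : ∀ k, z k ∈ proxSet g (μ k) (c (x k) + μ k • yh k))
    (hy : ∀ k, y k = yh k + (μ k)⁻¹ • (c (x k) - z k))
    (hdual : ∀ k, ‖gradient f (x k) +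
        ContinuousLinearMap.adjoint (fderiv ℝ c (x k)) (y k)‖ ≤ etol k)
    (hμ1 : μ 1 = μ 0)
    (hμupd : ∀ k, 1 ≤ k →
      μ (k + 1) =
        if ‖c (x k) - z k‖ ≤ θ * ‖c (x (k - 1)) - z (k - 1)‖ then μ k else κ * μ k)
    -- dom g closed
    (hdomcl : IsClosed {w : EuclideanSpace ℝ (Fin m) | g w ≠ ⊤})
    -- bounded tolerances
    (hetolbdd : ∃ Ce : ℝ, ∀ k, etol k ≤ Ce)
    -- accumulation point along a subsequence
    (xstar : EuclideanSpace ℝ (Fin n)) (φ : ℕ → ℕ) (hφ : StrictMono φ)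
    (hconv : Tendsto (fun k => x (φ k)) atTop (𝓝 xstar)) :
    ∃ zstar : EuclideanSpace ℝ (Fin m), g zstar ≠ ⊤ ∧
      ContinuousLinearMap.adjoint (fderiv ℝ c xstar) (c xstar - zstar) = 0 ∧
      (WithLp.equiv 2 (EuclideanSpace ℝ (Fin m) × ℝ)).symm (c xstar - zstar, (0 : ℝ)) ∈
        limNormalCone
          {q : WithLp 2 (EuclideanSpace ℝ (Fin m) × ℝ) |
            g ((WithLp.equiv 2 (EuclideanSpace ℝ (Fin m) × ℝ)) q).1 ≤
              ((((WithLp.equiv 2 (EuclideanSpace ℝ (Fin m) × ℝ)) q).2 : ℝ) : EReal)}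
          ((WithLp.equiv 2 (EuclideanSpace ℝ (Fin m) × ℝ)).symm
            (zstar, (g zstar).toReal)) := by
  classical
  obtain ⟨w₀, hw₀⟩ := hgproper
  have hμpos : ∀ k, 0 < μ k := by
    intro k
    induction k with
    | zero => exact hμ0
    | succ k ih =>
      rcases Nat.eq_zero_or_pos k with hk | hk
      · subst hk; simpa [hμ1] using hμ0
      · rw [hμupd k hk]
        split_ifs
        · exact ih
        · exact mul_pos hκ.1 ih
  have hμstep : ∀ k, 1 ≤ k → μ (k + 1) ≤ μ k := by
    intro k hk
    rw [hμupd k hk]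
    split_ifs
    · exact le_rfl
    · nlinarith [hμpos k, hκ.2, hκ.1]
  have hμanti : ∀ a b, 1 ≤ a → a ≤ b → μ b ≤ μ a := by
    intro a b ha hab
    induction b, hab using Nat.le_induction with
    | base => exact le_rfl
    | succ b hab ih => exact (hμstep b (ha.trans hab)).trans ih
  have hztop : ∀ k, g (z k) ≠ ⊤ := fun k => prox_ne_top (hz k) hw₀
  have hcxφ : Tendsto (fun k => c (x (φ k))) atTop (𝓝 (c xstar)) :=
    (hc.continuous.tendsto xstar).comp hconv
  suffices hmain : ∃ zs : EuclideanSpace ℝ (Fin m), g zs ≠ ⊤ ∧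
      ContinuousLinearMap.adjoint (fderiv ℝ c xstar) (c xstar - zs) = 0 ∧
      ∀ w, g w ≠ ⊤ → ‖c xstar - zs‖ ≤ ‖w - c xstar‖ by
    obtain ⟨zs, h1, h2, h3⟩ := hmain
    exact ⟨zs, h1, h2, final_normal g hgbot (c xstar) zs h1 h3⟩
  by_cases hcase : ∃ N, 1 ≤ N ∧ ∀ k, N ≤ k → μ (k + 1) = μ k
  · -- Case A : μ eventually constant, V → 0
    obtain ⟨N, hN1, hNc⟩ := hcase
    have hcond : ∀ k, N ≤ k → ‖c (x k) - z k‖ ≤ θ * ‖c (x (k - 1)) - z (k - 1)‖ := by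
      intro k hk
      by_contra hcon
      have h := hμupd k (hN1.trans hk)
      rw [if_neg hcon, hNc k hk] at h
      nlinarith [hμpos k, hκ.2, hκ.1]
    have hgeo : ∀ j, ‖c (x (N + j)) - z (N + j)‖ ≤ θ ^ j * ‖c (x N) - z N‖ := by
      intro j
      induction j with
      | zero => simp
      | succ j ih =>
        have h1 := hcond (N + j + 1) (by omega)
        have h2 : N + j + 1 - 1 = N + j := by omega
        rw [h2] at h1
        rw [pow_succ]
        refine h1.trans ?_
        nlinarith [hθ.1, ih, norm_nonneg (c (x (N + j)) - z (N + j)),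
          pow_nonneg hθ.1.le j]
    have hV0 : Tendsto (fun k => ‖c (x k) - z k‖) atTop (𝓝 0) := by
      rw [← tendsto_add_atTop_iff_nat N]
      have hlim : Tendsto (fun j => θ ^ j * ‖c (x N) - z N‖) atTop (𝓝 0) := by
        simpa using
          (tendsto_pow_atTop_nhds_zero_of_lt_one hθ.1.le hθ.2).mul_const ‖c (x N) - z N‖
      refine squeeze_zero (fun j => norm_nonneg _) (fun j => ?_) hlim
      rw [Nat.add_comm j N]
      exact hgeo j
    have hzφ : Tendsto (fun k => z (φ k)) atTop (𝓝 (c xstar)) := by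
      have hd : Tendsto (fun k => c (x (φ k)) - z (φ k)) atTop (𝓝 0) :=
        tendsto_zero_iff_norm_tendsto_zero.mpr (hV0.comp hφ.tendsto_atTop)
      have := hcxφ.sub hd
      simpa using this
    have hmem : c xstar ∈ {w : EuclideanSpace ℝ (Fin m) | g w ≠ ⊤} :=
      hdomcl.mem_of_tendsto hzφ (Eventually.of_forall fun k => hztop (φ k))
    refine ⟨c xstar, hmem, by simp, fun w hw => ?_⟩
    rw [sub_self, norm_zero]
    exact norm_nonneg _
  · -- Case B : μ → 0
    push_neg at hcase
    have hdecstep : ∀ N, 1 ≤ N → ∃ k, N ≤ k ∧ μ (k + 1) = κ * μ k := by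
      intro N hN
      obtain ⟨k, hk1, hk2⟩ := hcase N hN
      refine ⟨k, hk1, ?_⟩
      have h := hμupd k (hN.trans hk1)
      by_cases hcond : ‖c (x k) - z k‖ ≤ θ * ‖c (x (k - 1)) - z (k - 1)‖
      · rw [if_pos hcond] at h
        exact absurd h hk2
      · rw [if_neg hcond] at h
        exact h
    have hsmall : ∀ j, ∃ N, 1 ≤ N ∧ μ N ≤ κ ^ j * μ 1 := by
      intro j
      induction j with
      | zero => exact ⟨1, le_rfl, by simp⟩
      | succ j ih =>
        obtain ⟨N, hN1, hNle⟩ := ih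
        obtain ⟨k, hk1, hk2⟩ := hdecstep N hN1
        refine ⟨k + 1, by omega, ?_⟩
        rw [hk2, pow_succ]
        have hμkN : μ k ≤ μ N := hμanti N k hN1 hk1
        nlinarith [hκ.1, hμpos k]
    have hμto0 : Tendsto μ atTop (𝓝 0) := by
      rw [Metric.tendsto_atTop]
      intro ε hε
      have hκj : Tendsto (fun j => κ ^ j * μ 1) atTop (𝓝 0) := by
        simpa using (tendsto_pow_atTop_nhds_zero_of_lt_one hκ.1.le hκ.2).mul_const (μ 1)
      obtain ⟨j, hj⟩ := (hκj.eventually (gt_mem_nhds hε)).exists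
      obtain ⟨N, hN1, hNle⟩ := hsmall j
      refine ⟨N, fun k hk => ?_⟩
      have h1 : μ k ≤ μ N := hμanti N k hN1 hk
      rw [Real.dist_eq, sub_zero, abs_of_pos (hμpos k)]
      exact lt_of_le_of_lt (h1.trans hNle) hj
    obtain ⟨γ, hγpos, b, hb⟩ := hgpb
    obtain ⟨R, hR⟩ := isBounded_iff_forall_norm_le.mp hYbdd
    obtain ⟨Ce, hCe⟩ := hetolbdd
    set u : ℕ → EuclideanSpace ℝ (Fin m) := fun k => c (x k) + μ k • yh k with hu_def
    have hμφ : Tendsto (fun k => μ (φ k)) atTop (𝓝 0) := hμto0.comp hφ.tendsto_atTop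
    have hμyh : Tendsto (fun k => μ (φ k) • yh (φ k)) atTop (𝓝 0) := by
      refine squeeze_zero_norm (a := fun k => μ (φ k) * R) (fun k => ?_) ?_
      · rw [norm_smul, Real.norm_eq_abs, abs_of_pos (hμpos _)]
        exact mul_le_mul_of_nonneg_left (hR _ (hyh _)) (hμpos _).le
      · simpa using hμφ.mul_const R
    have huφ : Tendsto (fun k => u (φ k)) atTop (𝓝 (c xstar)) := by
      simpa using hcxφ.add hμyh
    obtain ⟨Cu, hCu⟩ : ∃ Cu, ∀ k, ‖u (φ k)‖ ≤ Cu := by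
      obtain ⟨Cu, hCu⟩ := huφ.norm.bddAbove_range
      exact ⟨Cu, fun k => hCu ⟨k, rfl⟩⟩
    set r₀ := (g w₀).toReal with hr₀
    set a : ℕ → ℝ := fun k => (g (z k)).toReal with ha_def
    have hbd : ∀ k, b ≤ a k + ‖z k‖ ^ 2 / (2 * γ) := by
      intro k
      have h := hb (z k)
      rw [← EReal.coe_toReal (hztop k) (hgbot _), ← EReal.coe_add, EReal.coe_le_coe_iff] at h
      exact h
    have hprox2 : ∀ k (w : EuclideanSpace ℝ (Fin m)), g w ≠ ⊤ →
        2 * μ k * a k + ‖z k - u k‖ ^ 2 ≤ 2 * μ k * (g w).toReal + ‖w - u k‖ ^ 2 :=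
      fun k w hw => prox_real_mul hgbot (hμpos k) (hz k) hw
    have hev : ∀ᶠ j in atTop, μ (φ j) ≤ γ / 4 :=
      hμφ.eventually (eventually_le_nhds (by positivity))
    obtain ⟨J₀, hJ₀⟩ := eventually_atTop.mp hev
    set J := max J₀ 1 with hJ
    set B := 8 * μ 0 * |r₀ - b| + 4 * Cu ^ 2 + 4 * (‖w₀‖ + Cu) ^ 2 with hBdef
    have hzbd : ∀ j, ‖z (φ (j + J))‖ ^ 2 ≤ B := by
      intro j
      set k := φ (j + J) with hkdef
      have hk1 : 1 ≤ k := le_trans (by omega : 1 ≤ j + J) hφ.le_apply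
      have hμk : μ k ≤ γ / 4 := hJ₀ (j + J) (by omega)
      have hμk0 : μ k ≤ μ 0 := by
        rw [← hμ1]; exact hμanti 1 k le_rfl hk1
      have h1 := hprox2 k w₀ hw₀
      have h2 := hbd k
      have h3 : ‖z k‖ ^ 2 ≤ 2 * ‖z k - u k‖ ^ 2 + 2 * ‖u k‖ ^ 2 := by
        have ht := norm_add_le (z k - u k) (u k)
        rw [sub_add_cancel] at ht
        nlinarith [norm_nonneg (z k - u k), norm_nonneg (u k), norm_nonneg (z k),
          sq_nonneg (‖z k - u k‖ - ‖u k‖), mul_self_le_mul_self (norm_nonneg (z k)) ht]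
      have h4 : ‖u k‖ ≤ Cu := hCu (j + J)
      have h4' : ‖u k‖ ^ 2 ≤ Cu ^ 2 := pow_le_pow_left₀ (norm_nonneg _) h4 2
      have h5 : ‖w₀ - u k‖ ≤ ‖w₀‖ + Cu := (norm_sub_le _ _).trans (by linarith)
      have h5' : ‖w₀ - u k‖ ^ 2 ≤ (‖w₀‖ + Cu) ^ 2 := pow_le_pow_left₀ (norm_nonneg _) h5 2
      have h6 : μ k * (r₀ - b) ≤ μ 0 * |r₀ - b| := by
        rcases le_or_gt 0 (r₀ - b) with h | h
        · rw [abs_of_nonneg h]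
          nlinarith [hμpos k]
        · nlinarith [hμpos k, hμ0, abs_nonneg (r₀ - b)]
      have hbmul : μ k * b ≤ μ k * (a k + ‖z k‖ ^ 2 / (2 * γ)) :=
        mul_le_mul_of_nonneg_left h2 (hμpos k).le
      have hzdiv : μ k * (‖z k‖ ^ 2 / (2 * γ)) ≤ ‖z k‖ ^ 2 / 8 := by
        have heq : μ k * (‖z k‖ ^ 2 / (2 * γ)) = ‖z k‖ ^ 2 * (μ k / (2 * γ)) := by ring
        rw [heq]
        have h8 : μ k / (2 * γ) ≤ 1 / 8 := by
          rw [div_le_div_iff₀ (by positivity) (by norm_num)]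
          nlinarith
        calc ‖z k‖ ^ 2 * (μ k / (2 * γ)) ≤ ‖z k‖ ^ 2 * (1 / 8) :=
              mul_le_mul_of_nonneg_left h8 (sq_nonneg _)
          _ = ‖z k‖ ^ 2 / 8 := by ring
      rw [mul_add] at hbmul
      nlinarith [h1, hbmul, hzdiv, h3, h4', h5', h6]
    have hzball : ∀ j, z (φ (j + J)) ∈
        Metric.closedBall (0 : EuclideanSpace ℝ (Fin m)) (Real.sqrt B) := by
      intro j
      rw [Metric.mem_closedBall, dist_zero_right,
        show ‖z (φ (j + J))‖ = Real.sqrt (‖z (φ (j + J))‖ ^ 2) by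
          rw [Real.sqrt_sq (norm_nonneg _)]]
      exact Real.sqrt_le_sqrt (hzbd j)
    obtain ⟨zs, -, ψ, hψ, hzs⟩ :=
      tendsto_subseq_of_bounded Metric.isBounded_closedBall hzball
    have hψJ : Tendsto (fun j => ψ j + J) atTop atTop :=
      tendsto_atTop_mono (fun j => Nat.le_add_right _ _) hψ.tendsto_atTop
    set idx : ℕ → ℕ := fun j => φ (ψ j + J) with hidx_def
    have hμidx : Tendsto (fun j => μ (idx j)) atTop (𝓝 0) := hμφ.comp hψJ
    have hcidx : Tendsto (fun j => c (x (idx j))) atTop (𝓝 (c xstar)) := hcxφ.comp hψJ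
    have huidx : Tendsto (fun j => u (idx j)) atTop (𝓝 (c xstar)) := huφ.comp hψJ
    have hxidx : Tendsto (fun j => x (idx j)) atTop (𝓝 xstar) := hconv.comp hψJ
    have hzidx : Tendsto (fun j => z (idx j)) atTop (𝓝 zs) := hzs
    have hzsdom : zs ∈ {w : EuclideanSpace ℝ (Fin m) | g w ≠ ⊤} :=
      hdomcl.mem_of_tendsto hzidx (Eventually.of_forall fun j => hztop _)
    obtain ⟨Cz, hCz⟩ : ∃ Cz, ∀ j, ‖z (idx j)‖ ≤ Cz := by
      obtain ⟨Cz, hCz⟩ := hzidx.norm.bddAbove_range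
      exact ⟨Cz, fun j => hCz ⟨j, rfl⟩⟩
    have hproj : ∀ w, g w ≠ ⊤ → ‖c xstar - zs‖ ≤ ‖w - c xstar‖ := by
      intro w hw
      have hle : ∀ j, ‖z (idx j) - u (idx j)‖ ^ 2 ≤
          2 * μ (idx j) * ((g w).toReal - b) + 2 * μ (idx j) * (Cz ^ 2 / (2 * γ)) +
            ‖w - u (idx j)‖ ^ 2 := by
        intro j
        have h1 := hprox2 (idx j) w hw
        have h2 := hbd (idx j)
        have h3 : ‖z (idx j)‖ ^ 2 ≤ Cz ^ 2 := pow_le_pow_left₀ (norm_nonneg _) (hCz j) 2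
        have h3' : ‖z (idx j)‖ ^ 2 / (2 * γ) ≤ Cz ^ 2 / (2 * γ) :=
          (div_le_div_iff_of_pos_right (by positivity)).mpr h3
        have h4 : b - Cz ^ 2 / (2 * γ) ≤ a (idx j) := by linarith
        have h5 := mul_le_mul_of_nonneg_left h4 (by linarith [hμpos (idx j)] : (0:ℝ) ≤ 2 * μ (idx j))
        rw [mul_sub] at h5
        linarith
      have hlhs : Tendsto (fun j => ‖z (idx j) - u (idx j)‖ ^ 2) atTop
          (𝓝 (‖zs - c xstar‖ ^ 2)) := ((hzidx.sub huidx).norm.pow 2)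
      have hrhs : Tendsto (fun j => 2 * μ (idx j) * ((g w).toReal - b) +
          2 * μ (idx j) * (Cz ^ 2 / (2 * γ)) + ‖w - u (idx j)‖ ^ 2) atTop
          (𝓝 (‖w - c xstar‖ ^ 2)) := by
        have t1 : Tendsto (fun j => 2 * μ (idx j)) atTop (𝓝 0) := by
          simpa using hμidx.const_mul 2
        have t2 := t1.mul_const ((g w).toReal - b)
        have t3 := t1.mul_const (Cz ^ 2 / (2 * γ))
        have t4 : Tendsto (fun j => ‖w - u (idx j)‖ ^ 2) atTop
            (𝓝 (‖w - c xstar‖ ^ 2)) := ((tendsto_const_nhds.sub huidx).norm.pow 2)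
        have := (t2.add t3).add t4
        simpa using this
      have hsq : ‖zs - c xstar‖ ^ 2 ≤ ‖w - c xstar‖ ^ 2 :=
        le_of_tendsto_of_tendsto' hlhs hrhs hle
      rw [norm_sub_rev]
      exact (pow_le_pow_iff_left₀ (norm_nonneg _) (norm_nonneg _) two_ne_zero).mp hsq
    set A : ℕ → (EuclideanSpace ℝ (Fin m) →L[ℝ] EuclideanSpace ℝ (Fin n)) :=
      fun k => ContinuousLinearMap.adjoint (fderiv ℝ c (x k)) with hA_def
    have hfdercont : Continuous fun p => fderiv ℝ c p := hc.continuous_fderiv one_ne_zero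
    have hAcont : Continuous fun p : EuclideanSpace ℝ (Fin n) =>
        ContinuousLinearMap.adjoint (fderiv ℝ c p) :=
      (LinearIsometryEquiv.continuous _).comp hfdercont
    have hAidx : Tendsto (fun j => A (idx j)) atTop
        (𝓝 (ContinuousLinearMap.adjoint (fderiv ℝ c xstar))) :=
      (hAcont.tendsto xstar).comp hxidx
    have hvidx : Tendsto (fun j => c (x (idx j)) - z (idx j)) atTop
        (𝓝 (c xstar - zs)) := hcidx.sub hzidx
    have hlim1 : Tendsto (fun j => A (idx j) (c (x (idx j)) - z (idx j))) atTop
        (𝓝 (ContinuousLinearMap.adjoint (fderiv ℝ c xstar) (c xstar - zs))) := by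
      have hcont := (isBoundedBilinearMap_apply (𝕜 := ℝ)
        (E := EuclideanSpace ℝ (Fin m)) (F := EuclideanSpace ℝ (Fin n))).continuous
      exact (hcont.tendsto (ContinuousLinearMap.adjoint (fderiv ℝ c xstar),
        c xstar - zs)).comp (hAidx.prodMk_nhds hvidx)
    set E : ℕ → EuclideanSpace ℝ (Fin n) :=
      fun k => gradient f (x k) + A k (y k) with hE_def
    have hEk : ∀ k, ‖E k‖ ≤ Ce := fun k => (hdual k).trans (hCe k)
    have hid : ∀ k, A k (c (x k) - z k) =
        μ k • E k - μ k • gradient f (x k) - μ k • A k (yh k) := by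
      intro k
      have h1 : μ k • y k = μ k • yh k + (c (x k) - z k) := by
        rw [hy k, smul_add, smul_smul, mul_inv_cancel₀ (hμpos k).ne', one_smul]
      have h3 : A k (y k) = E k - gradient f (x k) := by
        show A k (y k) = (gradient f (x k) + A k (y k)) - gradient f (x k)
        abel
      have h2 : A k (c (x k) - z k) = A k (μ k • y k) - A k (μ k • yh k) := by
        rw [h1, map_add]; abel
      rw [h2, map_smul, map_smul, h3, smul_sub]
    have hlim2 : Tendsto (fun j => A (idx j) (c (x (idx j)) - z (idx j))) atTop (𝓝 0) := by
      have t1 : Tendsto (fun j => μ (idx j) • E (idx j)) atTop (𝓝 0) := by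
        refine squeeze_zero_norm (a := fun j => μ (idx j) * Ce) (fun j => ?_) ?_
        · rw [norm_smul, Real.norm_eq_abs, abs_of_pos (hμpos _)]
          exact mul_le_mul_of_nonneg_left (hEk _) (hμpos _).le
        · simpa using hμidx.mul_const Ce
      have hgradcont : Continuous fun p => gradient f p := by
        unfold gradient
        exact (LinearIsometryEquiv.continuous _).comp (hf.continuous_fderiv one_ne_zero)
      have t2 : Tendsto (fun j => μ (idx j) • gradient f (x (idx j))) atTop
          (𝓝 ((0:ℝ) • gradient f xstar)) :=
        hμidx.smul ((hgradcont.tendsto xstar).comp hxidx)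
      rw [zero_smul] at t2
      obtain ⟨CA, hCA⟩ : ∃ CA, ∀ j, ‖A (idx j)‖ ≤ CA := by
        obtain ⟨CA, hCA⟩ := hAidx.norm.bddAbove_range
        exact ⟨CA, fun j => hCA ⟨j, rfl⟩⟩
      have t3 : Tendsto (fun j => μ (idx j) • A (idx j) (yh (idx j))) atTop (𝓝 0) := by
        refine squeeze_zero_norm (a := fun j => μ (idx j) * (CA * R)) (fun j => ?_) ?_
        · rw [norm_smul, Real.norm_eq_abs, abs_of_pos (hμpos _)]
          refine mul_le_mul_of_nonneg_left ?_ (hμpos _).le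
          refine ((A _).le_opNorm _).trans ?_
          have hy1 := hCA j
          have hy2 := hR _ (hyh (idx j))
          nlinarith [norm_nonneg (A (idx j)), norm_nonneg (yh (idx j))]
        · simpa using hμidx.mul_const (CA * R)
      have hfin := (t1.sub t2).sub t3
      simp only [sub_zero] at hfin
      simp only [hid]
      exact hfin
    exact ⟨zs, hzsdom, tendsto_nhds_unique hlim1 hlim2, hproj⟩

end
end

section
/- Let f: ℝⁿ → ℝ and c: ℝⁿ → ℝᵐ be continuously differentiable, g: ℝᵐ → ℝ ∪ {∞} proper, lower semicontinuous and prox-bounded with threshold γ_g, and fix μ ∈ (0, γ_g) and ŷ ∈ ℝᵐ. Define F(x,z) := f(x) + ‖c(x) + μŷ − z‖²/(2μ) and P(x,z) := F(x,z) + g(z). Then P(x,z) is level-bounded in z locally uniformly in x: for each α ∈ ℝ and each x̄ ∈ ℝⁿ there exists ε > 0 such that the set {(x,z) : P(x,z) ≤ α, ‖x − x̄‖ ≤ ε} is bounded. -/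
open Filter Topology Bornology

noncomputable section

variable {H : Type*} [NormedAddCommGroup H] [InnerProductSpace ℝ H]

private lemma quad_expand (t R μ γ0 : ℝ) (hμ : μ ≠ 0) (hγ : γ0 ≠ 0) :
    (t - R) ^ 2 / (2 * μ) - t ^ 2 / (2 * γ0)
      = (1 / (2 * μ) - 1 / (2 * γ0)) * t ^ 2 - (R / μ) * t + R ^ 2 / (2 * μ) := by
  field_simp
  ring

set_option maxHeartbeats 800000 in
/-- For μ below the prox-boundedness threshold of g, the explicit AL
integrand P(x,z) = f(x) + ‖c(x)+μŷ−z‖²/(2μ) + g(z) is level-bounded in z locally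
uniformly in x. -/
theorem explicit_AL_level_bounded {n m : ℕ}
    (f : EuclideanSpace ℝ (Fin n) → ℝ)
    (c : EuclideanSpace ℝ (Fin n) → EuclideanSpace ℝ (Fin m))
    (g : EuclideanSpace ℝ (Fin m) → EReal)
    (hf : ContDiff ℝ 1 f) (hc : ContDiff ℝ 1 c)
    (hgproper : ∃ z, g z ≠ ⊤) (hgbot : ∀ z, g z ≠ ⊥)
    (hglsc : LowerSemicontinuous g)
    (μ : ℝ) (hμpos : 0 < μ)
    -- μ lies strictly below the prox-boundedness threshold of g
    (hμthr : ∃ γ0 : ℝ, μ < γ0 ∧ ProxBoundedAt g γ0)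
    (yh : EuclideanSpace ℝ (Fin m)) :
    ∀ (α : ℝ) (xb : EuclideanSpace ℝ (Fin n)), ∃ ε > (0 : ℝ),
      IsBounded {q : EuclideanSpace ℝ (Fin n) × EuclideanSpace ℝ (Fin m) |
        ((f q.1 + ‖c q.1 + μ • yh - q.2‖ ^ 2 / (2 * μ) : ℝ) : EReal) + g q.2 ≤ (α : EReal)
          ∧ ‖q.1 - xb‖ ≤ ε} := by
  intro α xb
  obtain ⟨γ0, hμγ, b, hb⟩ := hμthr
  have hγ0 : (0 : ℝ) < γ0 := lt_trans hμpos hμγ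
  -- min of f on the closed ball
  have hcomp : IsCompact (Metric.closedBall xb 1) := isCompact_closedBall xb 1
  obtain ⟨x0, hx0, hmin⟩ := hcomp.exists_isMinOn ⟨xb, Metric.mem_closedBall_self zero_le_one⟩
    (hf.continuous.continuousOn)
  set mf := f x0 with hmf
  -- bound on ‖c x + μ • yh‖ on the ball
  obtain ⟨x1, hx1, hmax⟩ := hcomp.exists_isMaxOn ⟨xb, Metric.mem_closedBall_self zero_le_one⟩
    ((continuous_norm.comp (hc.continuous.add continuous_const)).continuousOn)
  set R := ‖c x1 + μ • yh‖ with hR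
  have hR0 : 0 ≤ R := norm_nonneg _
  set a : ℝ := 1 / (2 * μ) - 1 / (2 * γ0) with ha
  have ha0 : 0 < a := by
    have h : 1 / (2 * γ0) < 1 / (2 * μ) := by
      apply one_div_lt_one_div_of_lt <;> nlinarith
    rw [ha]; linarith
  set C : ℝ := α - mf - b with hC
  set M : ℝ := max (R + 1) (max 1 ((R / μ + |C| + 1) / a)) with hM
  refine ⟨1, zero_lt_one, ?_⟩
  have hsub : {q : EuclideanSpace ℝ (Fin n) × EuclideanSpace ℝ (Fin m) |
        ((f q.1 + ‖c q.1 + μ • yh - q.2‖ ^ 2 / (2 * μ) : ℝ) : EReal) + g q.2 ≤ (α : EReal)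
          ∧ ‖q.1 - xb‖ ≤ 1} ⊆
      (Metric.closedBall xb 1) ×ˢ (Metric.closedBall 0 M) := by
    rintro ⟨x, z⟩ ⟨hq, hx⟩
    have hxball : x ∈ Metric.closedBall xb 1 := by
      rw [Metric.mem_closedBall, dist_eq_norm]; exact hx
    refine ⟨hxball, ?_⟩
    rw [Metric.mem_closedBall, dist_zero_right]
    -- g z is a real number
    have hgt : g z ≠ ⊤ := by
      intro h
      rw [h, EReal.add_top_of_ne_bot (EReal.coe_ne_bot _)] at hq
      exact (EReal.coe_ne_top α) (top_le_iff.mp hq)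
    obtain ⟨s, hs⟩ : ∃ s : ℝ, g z = (s : ℝ) := by
      lift g z to ℝ using ⟨hgt, hgbot z⟩ with s
      exact ⟨s, rfl⟩
    rw [hs, ← EReal.coe_add, EReal.coe_le_coe_iff] at hq
    have hb' := hb z
    rw [hs, ← EReal.coe_add, EReal.coe_le_coe_iff] at hb'
    -- real facts
    have hmfx : mf ≤ f x := hmin hxball
    have hRx : ‖c x + μ • yh‖ ≤ R := hmax hxball
    set d := ‖c x + μ • yh - z‖ with hd
    set t := ‖z‖ with ht
    have hd0 : 0 ≤ d := norm_nonneg _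
    have ht0 : 0 ≤ t := norm_nonneg _
    have hdtR : t - R ≤ d := by
      have : t ≤ d + ‖c x + μ • yh‖ := by
        calc t = ‖(c x + μ • yh) - (c x + μ • yh - z)‖ := by rw [ht]; congr 1; abel
        _ ≤ ‖c x + μ • yh‖ + ‖c x + μ • yh - z‖ := norm_sub_le _ _
        _ = d + ‖c x + μ • yh‖ := by ring
      linarith
    by_contra hMt
    push_neg at hMt
    have hM1 : M < t := hMt
    have hMR : R + 1 ≤ M := le_max_left _ _
    have hM1' : (1 : ℝ) ≤ M := le_trans (le_max_left _ _) (le_max_right _ _)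
    have hMA : (R / μ + |C| + 1) / a ≤ M := le_trans (le_max_right _ _) (le_max_right _ _)
    have haM : R / μ + |C| + 1 ≤ a * M := by
      rw [div_le_iff₀ ha0] at hMA; linarith [hMA]
    -- d² ≥ (t−R)² since t > M ≥ R
    have htR : R ≤ t := by linarith
    have hdsq : (t - R) ^ 2 ≤ d ^ 2 := by nlinarith
    -- main inequality: a t² ≤ C + (R/μ) t
    have hkey : a * t ^ 2 ≤ C + (R / μ) * t := by
      have h2μ : (0 : ℝ) < 2 * μ := by linarith
      have h2γ : (0 : ℝ) < 2 * γ0 := by linarith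
      have e1 : d ^ 2 / (2 * μ) ≤ α - mf - s := by
        linarith [hq, hmfx]
      have e2 : b - t ^ 2 / (2 * γ0) ≤ s := by linarith
      have e3 : d ^ 2 / (2 * μ) - t ^ 2 / (2 * γ0) ≤ C := by
        rw [hC]; linarith
      have e4 : (t - R) ^ 2 / (2 * μ) ≤ d ^ 2 / (2 * μ) := by gcongr
      have e5 : (t - R) ^ 2 / (2 * μ) - t ^ 2 / (2 * γ0) ≤ C := by linarith
      have expand : (t - R) ^ 2 / (2 * μ) - t ^ 2 / (2 * γ0)
          = a * t ^ 2 - (R / μ) * t + R ^ 2 / (2 * μ) := by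
        rw [ha]; exact quad_expand t R μ γ0 (ne_of_gt hμpos) (ne_of_gt hγ0)
      rw [expand] at e5
      have : 0 ≤ R ^ 2 / (2 * μ) := by positivity
      linarith
    have habs : C ≤ |C| := le_abs_self C
    -- contradiction: a t² > (R/μ) t + |C| + 1
    have h1t : (1 : ℝ) ≤ t := le_trans hM1' (le_of_lt hM1)
    have hat : a * M < a * t := by exact (mul_lt_mul_iff_right₀ ha0).mpr hM1
    have : R / μ + |C| + 1 < a * t := lt_of_le_of_lt haM hat
    have hprod := mul_lt_mul_of_pos_right this (lt_of_lt_of_le zero_lt_one h1t)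
    have hRμ : 0 ≤ R / μ := div_nonneg hR0 hμpos.le
    have hC1 : 0 ≤ (|C| + 1) * (t - 1) :=
      mul_nonneg (by positivity) (by linarith)
    nlinarith [hprod, hkey, habs, hC1]
  exact ((Metric.isBounded_closedBall).prod (Metric.isBounded_closedBall)).subset hsub

end
end

section
/- Let f: ℝⁿ → ℝ and c: ℝⁿ → ℝᵐ be continuously differentiable, g: ℝᵐ → ℝ ∪ {∞} proper, lower semicontinuous and prox-bounded with threshold γ_g; fix μ ∈ (0, γ_g) and ŷ ∈ ℝᵐ, and set F(x,z) := f(x) + ‖c(x) + μŷ − z‖²/(2μ), p(x) := inf_z { F(x,z) + g(z) }, and O(x) := prox_{μg}(c(x) + μŷ). Let x ∈ ℝⁿ, z ∈ O(x), α ∈ (0,1), and let d ∈ ℝⁿ satisfy ⟨∇ₓF(x,z), d⟩ < 0. Then there exists γ̄ > 0 such that p(x + γd) ≤ p(x) + α γ ⟨∇ₓF(x,z), d⟩ for all γ ∈ (0, γ̄]; in particular, the backtracking linesearch of the nonmonotone descent method with oracle terminates after finitely many backtrackings. -/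
open Filter Topology Bornology

noncomputable section

variable {H : Type*} [NormedAddCommGroup H] [InnerProductSpace ℝ H]

/-- Armijo-type decrease of the implicit AL function p along a direction of
descent for the smooth part F(·, z) evaluated at an oracle point z ∈ O(x): the backtracking
linesearch succeeds for all sufficiently small stepsizes. -/
theorem linesearch_terminates {n m : ℕ}
    (f : EuclideanSpace ℝ (Fin n) → ℝ)
    (c : EuclideanSpace ℝ (Fin n) → EuclideanSpace ℝ (Fin m))
    (g : EuclideanSpace ℝ (Fin m) → EReal)
    (hf : ContDiff ℝ 1 f) (hc : ContDiff ℝ 1 c)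
    (hgproper : ∃ z, g z ≠ ⊤) (hgbot : ∀ z, g z ≠ ⊥)
    (hglsc : LowerSemicontinuous g)
    (μ : ℝ) (hμpos : 0 < μ)
    (hμthr : ∃ γ0 : ℝ, μ < γ0 ∧ ProxBoundedAt g γ0)
    (yh : EuclideanSpace ℝ (Fin m))
    (x : EuclideanSpace ℝ (Fin n)) (z : EuclideanSpace ℝ (Fin m))
    (hz : z ∈ proxSet g μ (c x + μ • yh))
    (α : ℝ) (hα : α ∈ Set.Ioo (0 : ℝ) 1)
    (d : EuclideanSpace ℝ (Fin n))
    (hd : (inner ℝ (gradient (fun x' => f x' + ‖c x' + μ • yh - z‖ ^ 2 / (2 * μ)) x) d : ℝ)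
      < 0) :
    ∃ γb > (0 : ℝ), ∀ γ : ℝ, 0 < γ → γ ≤ γb →
      (⨅ w, (((f (x + γ • d) + ‖c (x + γ • d) + μ • yh - w‖ ^ 2 / (2 * μ) : ℝ) : EReal)
          + g w)) ≤
      (⨅ w, (((f x + ‖c x + μ • yh - w‖ ^ 2 / (2 * μ) : ℝ) : EReal) + g w)) +
        ((α * γ *
          (inner ℝ (gradient (fun x' => f x' + ‖c x' + μ • yh - z‖ ^ 2 / (2 * μ)) x) d : ℝ)
          : ℝ) : EReal) := by
  classical
  set F' : EuclideanSpace ℝ (Fin n) → ℝ :=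
    fun x' => f x' + ‖c x' + μ • yh - z‖ ^ 2 / (2 * μ) with hF'
  set s : ℝ := (inner ℝ (gradient F' x) d : ℝ) with hsdef
  -- differentiability of F'
  have hFdiff : Differentiable ℝ F' := by
    intro y
    have h1 : DifferentiableAt ℝ (fun x' => ‖c x' + μ • yh - z‖ ^ 2) y :=
      (((hc.differentiable one_ne_zero y).add_const (μ • yh)).sub_const z).norm_sq ℝ
    have h2 : DifferentiableAt ℝ (fun x' => ‖c x' + μ • yh - z‖ ^ 2 / (2 * μ)) y :=
      by simpa [div_eq_mul_inv] using h1.mul_const (2 * μ)⁻¹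
    exact (hf.differentiable one_ne_zero y).add h2
  -- φ(γ) = F'(x + γ d) has derivative s at 0
  have hline : HasDerivAt (fun γ : ℝ => x + γ • d) d 0 := by
    simpa using ((hasDerivAt_id (0 : ℝ)).smul_const d).const_add x
  have hF'x : HasFDerivAt F' (fderiv ℝ F' x) (x + (0 : ℝ) • d) := by
    simpa using (hFdiff x).hasFDerivAt
  have hφ : HasDerivAt (fun γ : ℝ => F' (x + γ • d)) (fderiv ℝ F' x d) 0 :=
    by have := hF'x.comp_hasDerivAt (0 : ℝ) hline; exact this
  have hsf : s = fderiv ℝ F' x d := by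
    rw [hsdef, gradient, InnerProductSpace.toDual_symm_apply]
  rw [← hsf] at hφ
  have hs0 : s < 0 := hd
  have hαs : s < α * s := by nlinarith [hα.1, hα.2]
  -- slope inequality for small positive γ
  have hslope : Tendsto (slope (fun γ : ℝ => F' (x + γ • d)) 0) (𝓝[>] (0 : ℝ)) (𝓝 s) :=
    (hasDerivAt_iff_tendsto_slope.mp hφ).mono_left
      (nhdsWithin_mono _ fun y hy => ne_of_gt hy)
  have hev : ∀ᶠ γ in 𝓝[>] (0 : ℝ),
      slope (fun γ : ℝ => F' (x + γ • d)) 0 γ < α * s :=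
    hslope.eventually (gt_mem_nhds hαs)
  obtain ⟨γb, hγb, hsub⟩ := mem_nhdsGT_iff_exists_Ioc_subset.mp hev
  refine ⟨γb, hγb, ?_⟩
  intro γ hγ0 hγle
  have hmem : slope (fun γ : ℝ => F' (x + γ • d)) 0 γ < α * s := hsub ⟨hγ0, hγle⟩
  have hφγ : F' (x + γ • d) ≤ F' x + α * γ * s := by
    have h1 : (F' (x + γ • d) - F' x) / γ < α * s := by
      simpa [slope_def_field, div_eq_mul_inv] using hmem
    have h2 : F' (x + γ • d) - F' x < α * s * γ := (div_lt_iff₀ hγ0).mp h1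
    nlinarith
  -- the value of p at x equals F'(x) + g z
  have hp : (⨅ w, (((f x + ‖c x + μ • yh - w‖ ^ 2 / (2 * μ) : ℝ) : EReal) + g w))
      = ((F' x : ℝ) : EReal) + g z := by
    apply le_antisymm
    · exact iInf_le _ z
    · refine le_iInf fun w => ?_
      have hzw := hz w
      have key : g z + ((‖c x + μ • yh - z‖ ^ 2 / (2 * μ) : ℝ) : EReal)
          ≤ g w + ((‖c x + μ • yh - w‖ ^ 2 / (2 * μ) : ℝ) : EReal) := by
        simpa [norm_sub_rev] using hzw
      have := add_le_add_right key ((f x : ℝ) : EReal)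
      calc ((F' x : ℝ) : EReal) + g z
          = ((f x : ℝ) : EReal) + (g z + ((‖c x + μ • yh - z‖ ^ 2 / (2 * μ) : ℝ) : EReal)) := by
            rw [hF']; push_cast; abel
        _ ≤ ((f x : ℝ) : EReal) + (g w + ((‖c x + μ • yh - w‖ ^ 2 / (2 * μ) : ℝ) : EReal)) := this
        _ = ((f x + ‖c x + μ • yh - w‖ ^ 2 / (2 * μ) : ℝ) : EReal) + g w := by
            push_cast; abel
  calc (⨅ w, (((f (x + γ • d) + ‖c (x + γ • d) + μ • yh - w‖ ^ 2 / (2 * μ) : ℝ) : EReal) + g w))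
      ≤ ((F' (x + γ • d) : ℝ) : EReal) + g z := iInf_le _ z
    _ ≤ ((F' x + α * γ * s : ℝ) : EReal) + g z := by
        exact add_le_add_left (EReal.coe_le_coe_iff.mpr hφγ) _
    _ = ((F' x : ℝ) : EReal) + g z + ((α * γ * s : ℝ) : EReal) := by
        push_cast; abel
    _ = (⨅ w, (((f x + ‖c x + μ • yh - w‖ ^ 2 / (2 * μ) : ℝ) : EReal) + g w))
          + ((α * γ * s : ℝ) : EReal) := by rw [hp]

end
end

section
/- Consider the nonmonotone descent method with oracle applied to p, run with tolerance ε = 0, and suppose inf p ∈ ℝ. Then the sequences {Φⱼ} and {p(xʲ)} both converge to a common finite value p* ≥ inf p, and {Φⱼ} converges to p* from above (Φⱼ ≥ p* for all j). -/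
open Filter Topology Bornology

noncomputable section

variable {H : Type*} [NormedAddCommGroup H] [InnerProductSpace ℝ H]

/-- Smooth part of the explicit AL function: `F(x,z) = f(x) + ‖c(x) + μŷ − z‖²/(2μ)`. -/
def Ffun {n m : ℕ} (f : EuclideanSpace ℝ (Fin n) → ℝ)
    (c : EuclideanSpace ℝ (Fin n) → EuclideanSpace ℝ (Fin m))
    (μ : ℝ) (yh : EuclideanSpace ℝ (Fin m))
    (xx : EuclideanSpace ℝ (Fin n)) (zz : EuclideanSpace ℝ (Fin m)) : ℝ :=
  f xx + ‖c xx + μ • yh - zz‖ ^ 2 / (2 * μ)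

/-- The implicit AL function: `p(x) = inf_z { F(x,z) + g(z) }`. -/
def pfun {n m : ℕ} (f : EuclideanSpace ℝ (Fin n) → ℝ)
    (c : EuclideanSpace ℝ (Fin n) → EuclideanSpace ℝ (Fin m))
    (g : EuclideanSpace ℝ (Fin m) → EReal)
    (μ : ℝ) (yh : EuclideanSpace ℝ (Fin m)) (xx : EuclideanSpace ℝ (Fin n)) : EReal :=
  ⨅ zz, (((Ffun f c μ yh xx zz : ℝ) : EReal) + g zz)

/-- The partial gradient `∇ₓ F(x, z)`. -/
def gradF {n m : ℕ} (f : EuclideanSpace ℝ (Fin n) → ℝ)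
    (c : EuclideanSpace ℝ (Fin n) → EuclideanSpace ℝ (Fin m))
    (μ : ℝ) (yh : EuclideanSpace ℝ (Fin m))
    (xx : EuclideanSpace ℝ (Fin n)) (zz : EuclideanSpace ℝ (Fin m)) :
    EuclideanSpace ℝ (Fin n) :=
  gradient (fun x' => Ffun f c μ yh x' zz) xx

/-- The merit values Φⱼ and the objective values p(xʲ) of the
nonmonotone descent method with oracle converge to a common finite value p* ≥ inf p,
the former from above. -/
theorem descent_method_values_converge {n m : ℕ}
    (f : EuclideanSpace ℝ (Fin n) → ℝ)
    (c : EuclideanSpace ℝ (Fin n) → EuclideanSpace ℝ (Fin m))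
    (g : EuclideanSpace ℝ (Fin m) → EReal)
    (hf : ContDiff ℝ 1 f) (hc : ContDiff ℝ 1 c)
    (hgproper : ∃ z, g z ≠ ⊤) (hgbot : ∀ z, g z ≠ ⊥)
    (hglsc : LowerSemicontinuous g)
    (μ : ℝ) (hμpos : 0 < μ)
    (hμthr : ∃ γ0 : ℝ, μ < γ0 ∧ ProxBoundedAt g γ0)
    (yh : EuclideanSpace ℝ (Fin m))
    -- parameters of the descent method
    (α β θ ω ν : ℝ)
    (hα : α ∈ Set.Ioo (0 : ℝ) 1) (hβ : β ∈ Set.Ioo (0 : ℝ) 1)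
    (hθ : θ ∈ Set.Ioo (0 : ℝ) 1)
    (hω : ω ∈ Set.Ioc (0 : ℝ) 1) (hν : ν ∈ Set.Ioc (0 : ℝ) 1)
    -- iterates of the method (run with tolerance ε = 0, never terminating)
    (x : ℕ → EuclideanSpace ℝ (Fin n)) (zs : ℕ → EuclideanSpace ℝ (Fin m))
    (d : ℕ → EuclideanSpace ℝ (Fin n)) (γ : ℕ → ℝ) (l : ℕ → ℕ) (Φ : ℕ → EReal)
    (hΦ0 : Φ 0 = pfun f c g μ yh (x 0))
    (hzs : ∀ j, zs j ∈ proxSet g μ (c (x j) + μ • yh))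
    (hne : ∀ j, gradF f c μ yh (x j) (zs j) ≠ 0)
    (hdir : ∀ j, (inner ℝ (gradF f c μ yh (x j) (zs j)) (d j) : ℝ) ≤
        -(θ * (‖gradF f c μ yh (x j) (zs j)‖ * ‖d j‖)) ∧
      ω * ‖gradF f c μ yh (x j) (zs j)‖ ≤ ‖d j‖)
    (hγ : ∀ j, γ j = β ^ l j)
    (hls : ∀ j, pfun f c g μ yh (x j + γ j • d j) ≤
      Φ j + ((α * γ j * (inner ℝ (gradF f c μ yh (x j) (zs j)) (d j) : ℝ) : ℝ) : EReal))
    (hlargest : ∀ j, ∀ l' < l j, ¬ (pfun f c g μ yh (x j + β ^ l' • d j) ≤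
      Φ j + ((α * β ^ l' * (inner ℝ (gradF f c μ yh (x j) (zs j)) (d j) : ℝ) : ℝ) : EReal)))
    (hxupd : ∀ j, pfun f c g μ yh (x (j + 1)) ≤ pfun f c g μ yh (x j + γ j • d j))
    (hΦupd : ∀ j, Φ (j + 1) =
      ((1 - ν : ℝ) : EReal) * Φ j + ((ν : ℝ) : EReal) * pfun f c g μ yh (x (j + 1)))
    -- inf p ∈ ℝ
    (hinf : ∃ b : ℝ, ∀ x', (b : EReal) ≤ pfun f c g μ yh x')
    : ∃ pstar : ℝ,
      Tendsto Φ atTop (𝓝 ((pstar : ℝ) : EReal)) ∧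
      Tendsto (fun j => pfun f c g μ yh (x j)) atTop (𝓝 ((pstar : ℝ) : EReal)) ∧
      (⨅ x', pfun f c g μ yh x') ≤ ((pstar : ℝ) : EReal) ∧
      ∀ j, ((pstar : ℝ) : EReal) ≤ Φ j := by
  classical
  obtain ⟨b, hb⟩ := hinf
  obtain ⟨z0, hz0⟩ := hgproper
  -- p is real-valued
  have hpne : ∀ x', pfun f c g μ yh x' ≠ ⊤ ∧ pfun f c g μ yh x' ≠ ⊥ := by
    intro x'
    constructor
    · have h1 : pfun f c g μ yh x' ≤ ((Ffun f c μ yh x' z0 : ℝ) : EReal) + g z0 :=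
        iInf_le _ z0
      intro htop
      rw [htop] at h1
      have : ((Ffun f c μ yh x' z0 : ℝ) : EReal) + g z0 < ⊤ :=
        EReal.add_lt_top (EReal.coe_ne_top _) hz0
      exact absurd h1 (not_le.mpr this)
    · intro hbot
      have := hb x'
      rw [hbot] at this
      exact absurd (le_bot_iff.mp this) (EReal.coe_ne_bot b)
  set P : ℕ → ℝ := fun j => (pfun f c g μ yh (x j)).toReal with hPdef
  have hP : ∀ j, pfun f c g μ yh (x j) = ((P j : ℝ) : EReal) := fun j =>
    (EReal.coe_toReal (hpne (x j)).1 (hpne (x j)).2).symm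
  have hα0 : 0 < α := hα.1
  have hβ0 : 0 < β := hβ.1
  have hθ0 : 0 < θ := hθ.1
  -- p(x^{j+1}) ≤ Φ j
  have hchain : ∀ j, pfun f c g μ yh (x (j + 1)) ≤ Φ j := by
    intro j
    refine le_trans (hxupd j) (le_trans (hls j) ?_)
    have hγpos : 0 < γ j := by rw [hγ j]; positivity
    have hinner : (inner ℝ (gradF f c μ yh (x j) (zs j)) (d j) : ℝ) ≤ 0 := by
      refine le_trans (hdir j).1 ?_
      have : 0 ≤ θ * (‖gradF f c μ yh (x j) (zs j)‖ * ‖d j‖) := by positivity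
      linarith
    have ht : (α * γ j * (inner ℝ (gradF f c μ yh (x j) (zs j)) (d j) : ℝ)) ≤ 0 := by
      have hαγ : 0 ≤ α * γ j := by positivity
      exact mul_nonpos_of_nonneg_of_nonpos hαγ hinner
    calc Φ j + ((α * γ j * (inner ℝ (gradF f c μ yh (x j) (zs j)) (d j) : ℝ) : ℝ) : EReal)
        ≤ Φ j + (0 : EReal) := by
          apply add_le_add_right
          exact_mod_cast ht
      _ = Φ j := add_zero _
  -- Φ is real-valued
  have hex : ∀ j, ∃ r : ℝ, Φ j = (r : EReal) := by
    intro j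
    induction j with
    | zero => exact ⟨P 0, by rw [hΦ0, hP 0]⟩
    | succ k ih =>
      obtain ⟨r, hr⟩ := ih
      refine ⟨(1 - ν) * r + ν * P (k + 1), ?_⟩
      rw [hΦupd k, hr, hP (k + 1)]
      norm_cast
  have hΦreal : ∀ j, Φ j = (((Φ j).toReal : ℝ) : EReal) := by
    intro j
    obtain ⟨r, hr⟩ := hex j
    rw [hr]
    simp
  set φ : ℕ → ℝ := fun j => (Φ j).toReal with hφdef
  have hΦeq : ∀ j, Φ j = ((φ j : ℝ) : EReal) := hΦreal
  -- real recurrence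
  have hrec : ∀ j, φ (j + 1) = (1 - ν) * φ j + ν * P (j + 1) := by
    intro j
    have := hΦupd j
    rw [hΦeq (j + 1), hΦeq j, hP (j + 1), ← EReal.coe_mul, ← EReal.coe_mul,
      ← EReal.coe_add] at this
    exact_mod_cast this
  have hPleφ : ∀ j, P (j + 1) ≤ φ j := by
    intro j
    have := hchain j
    rw [hP (j + 1), hΦeq j] at this
    exact_mod_cast this
  have hν0 : 0 < ν := hν.1
  have hν1 : ν ≤ 1 := hν.2
  -- φ antitone
  have hanti : Antitone φ := by
    apply antitone_nat_of_succ_le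
    intro j
    rw [hrec j]
    nlinarith [hPleφ j]
  -- P j ≤ φ j
  have hPφ : ∀ j, P j ≤ φ j := by
    intro j
    cases j with
    | zero =>
      have : Φ 0 = pfun f c g μ yh (x 0) := hΦ0
      rw [hΦeq 0, hP 0] at this
      exact le_of_eq (EReal.coe_eq_coe_iff.mp this).symm
    | succ k =>
      rw [hrec k]
      nlinarith [hPleφ k]
  -- b lower bound
  have hbP : ∀ j, b ≤ P j := by
    intro j
    have := hb (x j)
    rw [hP j] at this
    exact_mod_cast this
  have hbφ : ∀ j, b ≤ φ j := fun j => le_trans (hbP j) (hPφ j)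
  have hbdd : BddBelow (Set.range φ) := ⟨b, by rintro _ ⟨j, rfl⟩; exact hbφ j⟩
  set pstar : ℝ := ⨅ j, φ j with hpstar
  have hφlim : Tendsto φ atTop (𝓝 pstar) := tendsto_atTop_ciInf hanti hbdd
  have hφsucc : Tendsto (fun j => φ (j + 1)) atTop (𝓝 pstar) :=
    hφlim.comp (tendsto_add_atTop_nat 1)
  -- P tends to pstar
  have hPsucc : Tendsto (fun j => P (j + 1)) atTop (𝓝 pstar) := by
    have h1 : Tendsto (fun j => (φ (j + 1) - (1 - ν) * φ j) / ν) atTop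
        (𝓝 ((pstar - (1 - ν) * pstar) / ν)) :=
      (hφsucc.sub (hφlim.const_mul _)).div_const ν
    have h2 : (pstar - (1 - ν) * pstar) / ν = pstar := by
      field_simp
      ring
    rw [h2] at h1
    refine h1.congr fun j => ?_
    have := hrec j
    field_simp
    linarith
  have hPlim : Tendsto P atTop (𝓝 pstar) := by
    rw [← tendsto_add_atTop_iff_nat 1]
    exact hPsucc
  refine ⟨pstar, ?_, ?_, ?_, ?_⟩
  · have : Tendsto (fun j => ((φ j : ℝ) : EReal)) atTop (𝓝 ((pstar : ℝ) : EReal)) :=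
      (EReal.continuous_coe_iff.mpr continuous_id).continuousAt.tendsto.comp hφlim
    exact this.congr fun j => (hΦeq j).symm
  · have : Tendsto (fun j => ((P j : ℝ) : EReal)) atTop (𝓝 ((pstar : ℝ) : EReal)) :=
      (EReal.continuous_coe_iff.mpr continuous_id).continuousAt.tendsto.comp hPlim
    exact this.congr fun j => (hP j).symm
  · have hlim : Tendsto (fun j => pfun f c g μ yh (x j)) atTop (𝓝 ((pstar : ℝ) : EReal)) := by
      have : Tendsto (fun j => ((P j : ℝ) : EReal)) atTop (𝓝 ((pstar : ℝ) : EReal)) :=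
        (EReal.continuous_coe_iff.mpr continuous_id).continuousAt.tendsto.comp hPlim
      exact this.congr fun j => (hP j).symm
    exact ge_of_tendsto' hlim fun j => iInf_le _ (x j)
  · intro j
    rw [hΦeq j]
    exact_mod_cast ciInf_le hbdd j

end
end
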